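/- arXiv:1407.1243 — 15 statements merged into one kernel-verified Lean document; each statement's English description precedes it below -/
import Mathlib

section
/- Let F be an algebra of partial functions and let f ∈ F. Then the set ↓f = {g ∈ F : g ⊆ f}, partially ordered by inclusion, is a Boolean algebra with least element ∅, greatest element f, meet given by intersection, and the complement of g ∈ ↓f given by A(g)∘f, which moreover equals f \ g as a set of ordered pairs. -/
/-! Algebras of partial functions: basic definitions. -/

namespace PFAlg

variable {X Y : Type*}

/-- `f ⊆ X × X` is a partial function. -/
def IsPF (f : Set (X × X)) : Prop :=
  ∀ ⦃x y z : X⦄, (x, y) ∈ f → (x, z) ∈ f → y = z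

/-- Composition of partial functions (binary relations), written left-to-right:
`f ∘ g = {(x,z) : ∃ y, (x,y) ∈ f and (y,z) ∈ g}`. -/
def comp (f g : Set (X × X)) : Set (X × X) :=
  {p | ∃ y, (p.1, y) ∈ f ∧ (y, p.2) ∈ g}

/-- Antidomain: the diagonal of the set of points where `f` is undefined. -/
def adom (f : Set (X × X)) : Set (X × X) :=
  {p | p.1 = p.2 ∧ ∀ y, (p.1, y) ∉ f}

/-- An algebra of partial functions on the base `X`: a nonempty collection of
partial functions closed under composition, intersection and antidomain. -/
structure IsPFAlgebra (F : Set (Set (X × X))) : Prop where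
  nonempty : F.Nonempty
  pf : ∀ f ∈ F, IsPF f
  comp_mem : ∀ f ∈ F, ∀ g ∈ F, comp f g ∈ F
  inter_mem : ∀ f ∈ F, ∀ g ∈ F, f ∩ g ∈ F
  adom_mem : ∀ f ∈ F, adom f ∈ F

/-- `m` is the supremum of `S` in the poset `(F, ⊆)`. -/
def IsLUBIn (F S : Set (Set (X × X))) (m : Set (X × X)) : Prop :=
  m ∈ F ∧ (∀ s ∈ S, s ⊆ m) ∧ ∀ c ∈ F, (∀ s ∈ S, s ⊆ c) → m ⊆ c

/-- `m` is the infimum of `S` in the poset `(F, ⊆)`. -/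
def IsGLBIn (F S : Set (Set (X × X))) (m : Set (X × X)) : Prop :=
  m ∈ F ∧ (∀ s ∈ S, m ⊆ s) ∧ ∀ c ∈ F, (∀ s ∈ S, c ⊆ s) → c ⊆ m

/-- `b` is an atom of `F`: a minimal element of `F \ {∅}`. -/
def IsAtomOf (F : Set (Set (X × X))) (b : Set (X × X)) : Prop :=
  b ∈ F ∧ b ≠ ∅ ∧ ∀ g ∈ F, g ≠ ∅ → g ⊆ b → g = b

/-- `F` is atomic: every nonempty member contains an atom. -/
def Atomic (F : Set (Set (X × X))) : Prop :=
  ∀ f ∈ F, f ≠ ∅ → ∃ b, IsAtomOf F b ∧ b ⊆ f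

/-- A representation of `F` by partial functions over the base `Y`. -/
structure IsRep (F : Set (Set (X × X))) (θ : Set (X × X) → Set (Y × Y)) : Prop where
  injOn : Set.InjOn θ F
  pf : ∀ f ∈ F, IsPF (θ f)
  comp_eq : ∀ f ∈ F, ∀ g ∈ F, θ (comp f g) = comp (θ f) (θ g)
  inter_eq : ∀ f ∈ F, ∀ g ∈ F, θ (f ∩ g) = θ f ∩ θ g
  adom_eq : ∀ f ∈ F, θ (adom f) = adom (θ f)

/-- `θ` is meet complete: it turns existing infima of nonempty subsets into intersections. -/
def MeetComplete (F : Set (Set (X × X))) (θ : Set (X × X) → Set (Y × Y)) : Prop :=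
  ∀ S ⊆ F, S.Nonempty → ∀ m, IsGLBIn F S m → θ m = ⋂ s ∈ S, θ s

/-- `θ` is join complete: it turns existing suprema into unions. -/
def JoinComplete (F : Set (Set (X × X))) (θ : Set (X × X) → Set (Y × Y)) : Prop :=
  ∀ S ⊆ F, ∀ m, IsLUBIn F S m → θ m = ⋃ s ∈ S, θ s

/-- `θ` is an atomic representation. -/
def AtomicRep (F : Set (Set (X × X))) (θ : Set (X × X) → Set (Y × Y)) : Prop :=
  ∀ f ∈ F, ∀ p ∈ θ f, ∃ b, IsAtomOf F b ∧ p ∈ θ b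

/-- Composition in `F` is completely left-distributive over joins. -/
def CompLeftDistribJoins (F : Set (Set (X × X))) : Prop :=
  ∀ a ∈ F, ∀ S ⊆ F, ∀ m, IsLUBIn F S m → IsLUBIn F ((fun s => comp a s) '' S) (comp a m)

/-- Composition in `F` is completely left-distributive over meets. -/
def CompLeftDistribMeets (F : Set (Set (X × X))) : Prop :=
  ∀ a ∈ F, ∀ S ⊆ F, S.Nonempty → ∀ m, IsGLBIn F S m →
    IsGLBIn F ((fun s => comp a s) '' S) (comp a m)

end PFAlg

open PFAlg in
/-- For `f` in an algebra of partial functions `F`, the set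
`↓f = {g ∈ F : g ⊆ f}`, ordered by inclusion, is a Boolean algebra with least element `∅`,
greatest element `f`, meet given by intersection, and complement of `g` given by
`A(g)∘f`, which equals `f \ g`. -/
theorem stmt0 {X : Type*} (F : Set (Set (X × X))) (hF : IsPFAlgebra F)
    (f : Set (X × X)) (hf : f ∈ F) :
    (∀ g ∈ F, g ⊆ f → comp (adom g) f = f \ g) ∧
    ∃ B : BooleanAlgebra {g : Set (X × X) // g ∈ F ∧ g ⊆ f},
      (∀ a b : {g : Set (X × X) // g ∈ F ∧ g ⊆ f},
        B.le a b ↔ (a : Set (X × X)) ⊆ (b : Set (X × X))) ∧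
      ((B.bot : {g : Set (X × X) // g ∈ F ∧ g ⊆ f}) : Set (X × X)) = ∅ ∧
      ((B.top : {g : Set (X × X) // g ∈ F ∧ g ⊆ f}) : Set (X × X)) = f ∧
      (∀ a b : {g : Set (X × X) // g ∈ F ∧ g ⊆ f},
        ((B.inf a b : {g : Set (X × X) // g ∈ F ∧ g ⊆ f}) : Set (X × X)) =
          (a : Set (X × X)) ∩ (b : Set (X × X))) ∧
      (∀ a : {g : Set (X × X) // g ∈ F ∧ g ⊆ f},
        ((B.compl a : {g : Set (X × X) // g ∈ F ∧ g ⊆ f}) : Set (X × X)) =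
          comp (adom (a : Set (X × X))) f) := by
  classical
  -- key fact: comp (adom g) f = f \ g for g ⊆ f
  have key : ∀ g ∈ F, g ⊆ f → comp (adom g) f = f \ g := by
    intro g hg hgf
    ext ⟨x, z⟩
    constructor
    · rintro ⟨y, ⟨hxy, hnd⟩, hyz⟩
      have hxy' : x = y := hxy
      subst hxy'
      exact ⟨hyz, hnd z⟩
    · rintro ⟨hfz, hgz⟩
      refine ⟨x, ⟨rfl, fun w hw => ?_⟩, hfz⟩
      have := hF.pf f hf (hgf hw) hfz
      exact hgz (this ▸ hw)
  have hempty : (∅ : Set (X × X)) ∈ F := by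
    have : comp (adom f) f = (∅ : Set (X × X)) := by
      have := key f hf subset_rfl; simp [this]
    exact this ▸ hF.comp_mem _ (hF.adom_mem f hf) f hf
  have sdiff_mem : ∀ g ∈ F, g ⊆ f → f \ g ∈ F := by
    intro g hg hgf
    rw [← key g hg hgf]
    exact hF.comp_mem _ (hF.adom_mem g hg) f hf
  refine ⟨key, ?_⟩
  set T := {g : Set (X × X) // g ∈ F ∧ g ⊆ f} with hT
  have union_mem : ∀ a b : T, (a : Set (X × X)) ∪ b ∈ F ∧ (a : Set (X × X)) ∪ b ⊆ f := by
    rintro ⟨a, ha, haf⟩ ⟨b, hb, hbf⟩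
    have h1 : f \ a ∈ F := sdiff_mem a ha haf
    have h2 : f \ b ∈ F := sdiff_mem b hb hbf
    have h3 : (f \ a) ∩ (f \ b) ∈ F := hF.inter_mem _ h1 _ h2
    have h4 : f \ ((f \ a) ∩ (f \ b)) ∈ F :=
      sdiff_mem _ h3 (Set.inter_subset_left.trans Set.diff_subset)
    have heq : f \ ((f \ a) ∩ (f \ b)) = a ∪ b := by
      ext p
      simp only [Set.mem_diff, Set.mem_inter_iff, Set.mem_union]
      constructor
      · rintro ⟨hpf, h⟩
        by_contra hc
        push_neg at hc
        exact h ⟨⟨hpf, hc.1⟩, ⟨hpf, hc.2⟩⟩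
      · rintro (h | h)
        · exact ⟨haf h, fun hc => hc.1.2 h⟩
        · exact ⟨hbf h, fun hc => hc.2.2 h⟩
    rw [heq] at h4
    exact ⟨h4, Set.union_subset haf hbf⟩
  let e : T → Set {p : X × X // p ∈ f} := fun g => {p | (p : X × X) ∈ (g : Set (X × X))}
  have he : Function.Injective e := by
    rintro ⟨a, ha, haf⟩ ⟨b, hb, hbf⟩ h
    ext1
    ext p
    constructor
    · intro hp
      have : (⟨p, haf hp⟩ : {p : X × X // p ∈ f}) ∈ e ⟨a, ha, haf⟩ := hp
      rw [h] at this; exact this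
    · intro hp
      have : (⟨p, hbf hp⟩ : {p : X × X // p ∈ f}) ∈ e ⟨b, hb, hbf⟩ := hp
      rw [← h] at this; exact this
  refine ⟨@Function.Injective.booleanAlgebra T _
    ⟨fun a b => ⟨(a : Set (X × X)) ∪ b, union_mem a b⟩⟩
    ⟨fun a b => ⟨(a : Set (X × X)) ∩ b,
      hF.inter_mem _ a.2.1 _ b.2.1, Set.inter_subset_left.trans a.2.2⟩⟩
    ⟨fun a b => e a ≤ e b⟩
    ⟨fun a b => e a < e b⟩
    ⟨⟨f, hf, subset_rfl⟩⟩
    ⟨⟨∅, hempty, Set.empty_subset f⟩⟩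
    ⟨fun a => ⟨f \ a, sdiff_mem _ a.2.1 a.2.2, Set.diff_subset⟩⟩
    ⟨fun a b => ⟨(a : Set (X × X)) ∩ (f \ b),
      hF.inter_mem _ a.2.1 _ (sdiff_mem _ b.2.1 b.2.2), Set.inter_subset_left.trans a.2.2⟩⟩
    ⟨fun a b => ⟨(f \ a) ∪ b,
      union_mem ⟨f \ a, sdiff_mem _ a.2.1 a.2.2, Set.diff_subset⟩ b⟩⟩
    _ e he
    Iff.rfl
    Iff.rfl
    (fun a b => rfl)
    (fun a b => rfl)
    (Set.ext fun ⟨p, hp⟩ => ⟨fun _ => trivial, fun _ => hp⟩)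
    (Set.ext fun ⟨p, hp⟩ => ⟨fun h => h, fun h => h.elim⟩)
    (fun a => Set.ext fun ⟨p, hp⟩ => ⟨fun h => h.2, fun h => ⟨hp, h⟩⟩)
    (fun a b => Set.ext fun ⟨p, hp⟩ => ⟨fun h => ⟨h.1, h.2.2⟩, fun h => ⟨h.1, hp, h.2⟩⟩)
    (fun a b => Set.ext fun ⟨p, hp⟩ =>
      ⟨fun h hpa => h.elim (fun h1 => absurd hpa h1.2) id,
       fun h => if hpa : p ∈ (a : Set (X × X)) then Or.inr (h hpa) else Or.inl ⟨hp, hpa⟩⟩),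
    ?_, rfl, rfl, fun a b => rfl, ?_⟩
  · intro a b
    constructor
    · intro h p hp
      have : (⟨p, a.2.2 hp⟩ : {p : X × X // p ∈ f}) ∈ e a := hp
      exact h this
    · intro h p hp
      exact h hp
  · intro a
    exact (key a a.2.1 a.2.2).symm
end

section
/- Let F be an algebra of partial functions, let θ be a representation of F by partial functions, and let f ∈ F. Then for every g ∈ F with g ⊆ f we have θ(A(g)∘f) = θ(f) \ θ(g); consequently θ restricts to an isomorphism from the Boolean algebra ↓f = {g ∈ F : g ⊆ f} (with meet intersection and complement g ↦ A(g)∘f) onto a field of sets of subsets of θ(f). -/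
namespace PFAlg
/-- For a partial function `f` and `g ⊆ f`, `A(g)∘f = f \\ g`. -/
theorem comp_adom_eq_diff {Z : Type*} {f g : Set (Z × Z)} (hf : IsPF f) (hgf : g ⊆ f) :
    comp (adom g) f = f \ g := by
  ext ⟨x, z⟩
  constructor
  · rintro ⟨y, ⟨hxy, hng⟩, hyz⟩
    simp only at hxy
    subst hxy
    exact ⟨hyz, hng z⟩
  · rintro ⟨hxz, hng⟩
    refine ⟨x, ⟨rfl, fun w hw => ?_⟩, hxz⟩
    have := hf (hgf hw) hxz
    subst this
    exact hng hw

theorem comp_adom_subset {Z : Type*} (g f : Set (Z × Z)) : comp (adom g) f ⊆ f := by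
  rintro ⟨x, z⟩ ⟨y, ⟨hxy, -⟩, hyz⟩
  simp only at hxy
  subst hxy
  exact hyz
end PFAlg

open PFAlg in
/-- a representation `θ` satisfies `θ(A(g)∘f) = θ(f) \ θ(g)` for `g ⊆ f` in `F`,
and restricts to an isomorphism from the Boolean algebra `↓f` onto a field of sets of
subsets of `θ(f)`. -/
theorem stmt1 {X Y : Type*} (F : Set (Set (X × X))) (hF : IsPFAlgebra F)
    (θ : Set (X × X) → Set (Y × Y)) (hθ : IsRep F θ)
    (f : Set (X × X)) (hf : f ∈ F) :
    (∀ g ∈ F, g ⊆ f → θ (comp (adom g) f) = θ f \ θ g) ∧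
    -- θ maps ↓f into subsets of θ(f), and is an order isomorphism onto its image
    (∀ g ∈ F, g ⊆ f → θ g ⊆ θ f) ∧
    (∀ g ∈ F, g ⊆ f → ∀ g' ∈ F, g' ⊆ f → (g ⊆ g' ↔ θ g ⊆ θ g')) ∧
    -- the image of ↓f is a field of sets over θ(f)
    (∅ : Set (Y × Y)) ∈ {A | ∃ g ∈ F, g ⊆ f ∧ θ g = A} ∧
    θ f ∈ {A | ∃ g ∈ F, g ⊆ f ∧ θ g = A} ∧
    (∀ A ∈ {A | ∃ g ∈ F, g ⊆ f ∧ θ g = A}, ∀ B ∈ {A | ∃ g ∈ F, g ⊆ f ∧ θ g = A},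
      A ∩ B ∈ {A | ∃ g ∈ F, g ⊆ f ∧ θ g = A}) ∧
    (∀ A ∈ {A | ∃ g ∈ F, g ⊆ f ∧ θ g = A}, θ f \ A ∈ {A | ∃ g ∈ F, g ⊆ f ∧ θ g = A}) ∧
    (∀ A ∈ {A | ∃ g ∈ F, g ⊆ f ∧ θ g = A}, A ⊆ θ f) := by
  have hsub : ∀ g ∈ F, g ⊆ f → θ g ⊆ θ f := by
    intro g hg hgf
    have h1 : g ∩ f = g := Set.inter_eq_left.mpr hgf
    have := hθ.inter_eq g hg f hf
    rw [h1] at this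
    rw [this]
    exact Set.inter_subset_right
  have hkey : ∀ g ∈ F, g ⊆ f → θ (comp (adom g) f) = θ f \ θ g := by
    intro g hg hgf
    have h2 : θ (comp (adom g) f) = comp (adom (θ g)) (θ f) := by
      rw [hθ.comp_eq (adom g) (hF.adom_mem g hg) f hf, hθ.adom_eq g hg]
    rw [h2, comp_adom_eq_diff (hθ.pf f hf) (hsub g hg hgf)]
  have hmono : ∀ g ∈ F, g ⊆ f → ∀ g' ∈ F, g' ⊆ f → (g ⊆ g' ↔ θ g ⊆ θ g') := by
    intro g hg hgf g' hg' hg'f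
    constructor
    · intro h
      have h1 : g ∩ g' = g := Set.inter_eq_left.mpr h
      have := hθ.inter_eq g hg g' hg'
      rw [h1] at this
      rw [this]; exact Set.inter_subset_right
    · intro h
      have h1 : θ (g ∩ g') = θ g := by
        rw [hθ.inter_eq g hg g' hg', Set.inter_eq_left.mpr h]
      have := hθ.injOn (hF.inter_mem g hg g' hg') hg h1
      rw [← this]; exact Set.inter_subset_right
  refine ⟨hkey, hsub, hmono, ?_, ⟨f, hf, subset_rfl, rfl⟩, ?_, ?_, ?_⟩
  · refine ⟨comp (adom f) f, hF.comp_mem _ (hF.adom_mem f hf) f hf,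
      comp_adom_subset f f, ?_⟩
    rw [hkey f hf subset_rfl, Set.diff_self]
  · rintro A ⟨g, hg, hgf, rfl⟩ B ⟨g', hg', hg'f, rfl⟩
    exact ⟨g ∩ g', hF.inter_mem g hg g' hg',
      (Set.inter_subset_left).trans hgf, hθ.inter_eq g hg g' hg'⟩
  · rintro A ⟨g, hg, hgf, rfl⟩
    exact ⟨comp (adom g) f, hF.comp_mem _ (hF.adom_mem g hg) f hf,
      comp_adom_subset g f, hkey g hg hgf⟩
  · rintro A ⟨g, hg, hgf, rfl⟩
    exact hsub g hg hgf
end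

section
/- Let F be an algebra of partial functions and let θ be a representation of F by partial functions. If θ is meet complete, then θ is join complete. -/
open PFAlg in
/-- a meet-complete representation by partial functions is join complete. -/
theorem stmt2 {X Y : Type*} (F : Set (Set (X × X))) (hF : IsPFAlgebra F)
    (θ : Set (X × X) → Set (Y × Y)) (hθ : IsRep F θ)
    (hmeet : MeetComplete F θ) :
    JoinComplete F θ := by
  intro S hS m hm
  obtain ⟨hmF, hub, hlub⟩ := hm
  -- θ is monotone on F
  have hmono : ∀ f ∈ F, ∀ g ∈ F, f ⊆ g → θ f ⊆ θ g := by
    intro f hf g hg hfg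
    have h1 : f ∩ g = f := Set.inter_eq_left.mpr hfg
    have h2 := hθ.inter_eq f hf g hg
    rw [h1] at h2
    rw [h2]
    exact Set.inter_subset_right
  -- ∅ ∈ F and θ ∅ = ∅
  obtain ⟨f0, hf0⟩ := hF.nonempty
  have hcompempty : ∀ (g : Set (X × X)), comp (adom g) g = ∅ := by
    intro g
    ext ⟨u, v⟩
    simp only [comp, adom, Set.mem_setOf_eq, Set.mem_empty_iff_false, iff_false, not_exists]
    rintro w ⟨⟨rfl, hno⟩, hw⟩
    exact hno v hw
  have hcompemptyY : ∀ (g : Set (Y × Y)), comp (adom g) g = ∅ := by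
    intro g
    ext ⟨u, v⟩
    simp only [comp, adom, Set.mem_setOf_eq, Set.mem_empty_iff_false, iff_false, not_exists]
    rintro w ⟨⟨rfl, hno⟩, hw⟩
    exact hno v hw
  have hemptyF : (∅ : Set (X × X)) ∈ F := by
    rw [← hcompempty f0]
    exact hF.comp_mem _ (hF.adom_mem _ hf0) _ hf0
  have hθempty : θ (∅ : Set (X × X)) = ∅ := by
    have h := hθ.comp_eq (adom f0) (hF.adom_mem _ hf0) f0 hf0
    rw [hcompempty f0, hθ.adom_eq f0 hf0, hcompemptyY (θ f0)] at h
    exact h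
  rcases S.eq_empty_or_nonempty with rfl | hSne
  · -- S = ∅ : m = ∅
    have hm0 : m = ∅ :=
      Set.subset_empty_iff.mp (hlub ∅ hemptyF (by simp))
    simp [hm0, hθempty]
  · ext ⟨x, y⟩
    simp only [Set.mem_iUnion]
    constructor
    · intro hxy
      by_contra hnot
      push_neg at hnot
      -- (x,x) ∈ adom (θ s) for all s ∈ S
      have hadom : ∀ s ∈ S, (x, x) ∈ adom (θ s) := by
        intro s hs
        refine ⟨rfl, fun w hw => ?_⟩
        have hwm : (x, w) ∈ θ m := hmono s (hS hs) m hmF (hub s hs) hw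
        have := hθ.pf m hmF hwm hxy
        exact hnot s hs (this ▸ hw)
      -- the family T = {A(s)∘m : s ∈ S}
      set T : Set (Set (X × X)) := (fun s => comp (adom s) m) '' S with hT
      have hTF : T ⊆ F := by
        rintro _ ⟨s, hs, rfl⟩
        exact hF.comp_mem _ (hF.adom_mem _ (hS hs)) _ hmF
      have hTne : T.Nonempty := hSne.image _
      -- ∅ is the infimum of T in F
      have hglb : IsGLBIn F T (∅ : Set (X × X)) := by
        refine ⟨hemptyF, fun t _ => Set.empty_subset t, ?_⟩
        intro c hc hcsub
        rw [Set.subset_empty_iff]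
        by_contra hcne
        obtain ⟨⟨u, v⟩, huv⟩ := Set.nonempty_iff_ne_empty.mpr hcne
        -- a' = A(c) ∘ m contains every s ∈ S
        have ha'F : comp (adom c) m ∈ F :=
          hF.comp_mem _ (hF.adom_mem _ hc) _ hmF
        have hsa' : ∀ s ∈ S, s ⊆ comp (adom c) m := by
          intro s hs ⟨p, q⟩ hpq
          refine ⟨p, ⟨rfl, fun w hw => ?_⟩, hub s hs hpq⟩
          obtain ⟨z, ⟨_, hno⟩, _⟩ := hcsub (comp (adom s) m) ⟨s, hs, rfl⟩ hw
          exact hno q hpq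
        have hma' : m ⊆ comp (adom c) m := hlub _ ha'F hsa'
        obtain ⟨s₀, hs₀⟩ := hSne
        obtain ⟨z, hz, hum⟩ := hcsub (comp (adom s₀) m) ⟨s₀, hs₀, rfl⟩ huv
        obtain rfl : u = z := hz.1
        obtain ⟨w, hw, _⟩ := hma' hum
        obtain rfl : u = w := hw.1
        exact hw.2 v huv
      -- apply meet completeness
      have hmc := hmeet T hTF hTne ∅ hglb
      rw [hθempty] at hmc
      have : (x, y) ∈ ⋂ t ∈ T, θ t := by
        simp only [Set.mem_iInter]
        rintro _ ⟨s, hs, rfl⟩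
        rw [hθ.comp_eq _ (hF.adom_mem _ (hS hs)) _ hmF, hθ.adom_eq _ (hS hs)]
        exact ⟨x, hadom s hs, hxy⟩
      rw [← hmc] at this
      exact this
    · rintro ⟨s, hs, hxy⟩
      exact hmono s (hS hs) m hmF (hub s hs) hxy
end

section
/- Let F be an algebra of partial functions and let θ be a representation of F by partial functions. If θ is join complete, then θ is meet complete. -/
open PFAlg in
/-- a join-complete representation by partial functions is meet complete. -/
theorem stmt3 {X Y : Type*} (F : Set (Set (X × X))) (hF : IsPFAlgebra F)
    (θ : Set (X × X) → Set (Y × Y)) (hθ : IsRep F θ)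
    (hjoin : JoinComplete F θ) :
    MeetComplete F θ := by
  intro S hS hSne m hm
  obtain ⟨s₀, hs₀⟩ := hSne
  obtain ⟨hmF, hmlb, hmglb⟩ := hm
  have hs₀F : s₀ ∈ F := hS hs₀
  -- monotonicity of θ
  have hmono : ∀ a ∈ F, ∀ b ∈ F, a ⊆ b → θ a ⊆ θ b := by
    intro a ha b hb hab
    have h1 : a ∩ b = a := Set.inter_eq_self_of_subset_left hab
    have h2 := hθ.inter_eq a ha b hb
    rw [h1] at h2
    rw [h2]
    exact Set.inter_subset_right
  apply subset_antisymm
  · intro p hp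
    exact Set.mem_iInter₂.2 fun s hs => hmono m hmF s (hS hs) (hmlb s hs) hp
  · intro p hp
    have hp' : ∀ s ∈ S, p ∈ θ s := fun s hs => Set.mem_iInter₂.1 hp s hs
    obtain ⟨x, y⟩ := p
    -- the family f s = A(s ⊓ s₀) ∘ s₀ and the set T
    have hfF : ∀ s ∈ S, comp (adom (s ∩ s₀)) s₀ ∈ F := fun s hs =>
      hF.comp_mem _ (hF.adom_mem _ (hF.inter_mem s (hS hs) s₀ hs₀F)) s₀ hs₀F
    have hfsub : ∀ s : Set (X × X), comp (adom (s ∩ s₀)) s₀ ⊆ s₀ := by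
      rintro s ⟨u, v⟩ ⟨w, ⟨hw, -⟩, hv⟩
      simp only at hw
      subst hw
      exact hv
    have hTF : insert m ((fun s => comp (adom (s ∩ s₀)) s₀) '' S) ⊆ F := by
      rintro t (rfl | ⟨s, hs, rfl⟩)
      · exact hmF
      · exact hfF s hs
    -- s₀ is the least upper bound of T
    have hlub : IsLUBIn F (insert m ((fun s => comp (adom (s ∩ s₀)) s₀) '' S)) s₀ := by
      refine ⟨hs₀F, ?_, ?_⟩
      · rintro t (rfl | ⟨s, hs, rfl⟩)
        · exact hmlb s₀ hs₀
        · exact hfsub s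
      · intro c hc hub
        have hcs₀F : c ∩ s₀ ∈ F := hF.inter_mem c hc s₀ hs₀F
        have hmc : m ⊆ c ∩ s₀ :=
          Set.subset_inter (hub m (Set.mem_insert _ _)) (hmlb s₀ hs₀)
        have hfc : ∀ s ∈ S, comp (adom (s ∩ s₀)) s₀ ⊆ c ∩ s₀ := fun s hs =>
          Set.subset_inter (hub _ (Set.mem_insert_of_mem _ ⟨s, hs, rfl⟩)) (hfsub s)
        have hgF : comp (adom (c ∩ s₀)) s₀ ∈ F :=
          hF.comp_mem _ (hF.adom_mem _ hcs₀F) s₀ hs₀F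
        -- g := A(c ⊓ s₀) ∘ s₀ is a lower bound of S, hence g ⊆ m
        have hgm : comp (adom (c ∩ s₀)) s₀ ⊆ m := by
          apply hmglb _ hgF
          rintro s hs ⟨u, v⟩ ⟨w, ⟨hw, hn⟩, hv⟩
          simp only at hw hn
          subst hw
          have hsu : ∃ z, (u, z) ∈ s ∩ s₀ := by
            by_contra h
            push_neg at h
            exact hn v (hfc s hs ⟨u, ⟨rfl, h⟩, hv⟩)
          obtain ⟨z, hz⟩ := hsu
          have hzv : z = v := hF.pf s₀ hs₀F hz.2 hv
          subst hzv
          exact hz.1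
        -- hence g = ∅, so s₀ ⊆ c
        rintro ⟨u, v⟩ huv
        have hex : ∃ z, (u, z) ∈ c ∩ s₀ := by
          by_contra h
          push_neg at h
          exact h v (hmc (hgm ⟨u, ⟨rfl, h⟩, huv⟩))
        obtain ⟨z, hz⟩ := hex
        have hzv : z = v := hF.pf s₀ hs₀F hz.2 huv
        subst hzv
        exact hz.1
    -- apply join completeness
    have hps₀ : (x, y) ∈ θ s₀ := hp' s₀ hs₀
    have hjeq := hjoin _ hTF s₀ hlub
    have hmem : (x, y) ∈ ⋃ t ∈ insert m ((fun s => comp (adom (s ∩ s₀)) s₀) '' S), θ t := by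
      rw [← hjeq]; exact hps₀
    simp only [Set.mem_iUnion, exists_prop] at hmem
    obtain ⟨t, ht, hpt⟩ := hmem
    rcases ht with rfl | ⟨s, hs, rfl⟩
    · exact hpt
    · exfalso
      have heq : θ (comp (adom (s ∩ s₀)) s₀) = comp (adom (θ s ∩ θ s₀)) (θ s₀) := by
        rw [hθ.comp_eq _ (hF.adom_mem _ (hF.inter_mem s (hS hs) s₀ hs₀F)) s₀ hs₀F,
          hθ.adom_eq _ (hF.inter_mem s (hS hs) s₀ hs₀F),
          hθ.inter_eq s (hS hs) s₀ hs₀F]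
      rw [heq] at hpt
      obtain ⟨w, ⟨hw, hn⟩, -⟩ := hpt
      exact hn y ⟨hp' s hs, hps₀⟩
end

section
/- Let F be an algebra of partial functions and let θ be a representation of F by partial functions. Then θ is atomic if and only if θ is complete (i.e., both meet complete and join complete). -/
open PFAlg in
lemma aux_inter_adom {X : Type*} (f : Set (X × X)) : f ∩ adom f = ∅ := by
  ext ⟨x, y⟩
  simp only [Set.mem_inter_iff, Set.mem_empty_iff_false, iff_false, not_and]
  intro hf h
  obtain ⟨hxy, h2⟩ := h
  exact h2 y hf

open PFAlg in
lemma aux_empty_mem {X : Type*} {F : Set (Set (X × X))} (hF : IsPFAlgebra F) :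
    (∅ : Set (X × X)) ∈ F := by
  obtain ⟨f, hf⟩ := hF.nonempty
  have := hF.inter_mem f hf _ (hF.adom_mem f hf)
  rwa [aux_inter_adom] at this

open PFAlg in
lemma aux_theta_empty {X Y : Type*} {F : Set (Set (X × X))} {θ : Set (X × X) → Set (Y × Y)}
    (hF : IsPFAlgebra F) (hθ : IsRep F θ) : θ ∅ = ∅ := by
  obtain ⟨f, hf⟩ := hF.nonempty
  have h1 : θ (f ∩ adom f) = θ f ∩ adom (θ f) := by
    rw [hθ.inter_eq f hf _ (hF.adom_mem f hf), hθ.adom_eq f hf]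
  rw [aux_inter_adom] at h1
  rw [h1, aux_inter_adom]

open PFAlg in
lemma aux_mono {X Y : Type*} {F : Set (Set (X × X))} {θ : Set (X × X) → Set (Y × Y)}
    (hθ : IsRep F θ) {f g : Set (X × X)} (hf : f ∈ F) (hg : g ∈ F) (h : f ⊆ g) :
    θ f ⊆ θ g := by
  have hfg : f ∩ g = f := Set.inter_eq_left.mpr h
  calc θ f = θ (f ∩ g) := by rw [hfg]
    _ = θ f ∩ θ g := hθ.inter_eq f hf g hg
    _ ⊆ θ g := Set.inter_subset_right

open PFAlg in
/-- a representation by partial functions is atomic iff it is complete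
(i.e. both meet complete and join complete). -/
theorem stmt4 {X Y : Type*} (F : Set (Set (X × X))) (hF : IsPFAlgebra F)
    (θ : Set (X × X) → Set (Y × Y)) (hθ : IsRep F θ) :
    AtomicRep F θ ↔ (MeetComplete F θ ∧ JoinComplete F θ) := by
  constructor
  · intro hAt
    constructor
    · -- Meet complete
      rintro S hSF ⟨s₀, hs₀⟩ m ⟨hmF, hml, hmg⟩
      apply Set.Subset.antisymm
      · apply Set.subset_iInter₂
        intro s hs
        exact aux_mono hθ hmF (hSF hs) (hml s hs)
      · intro p hp
        have hps₀ : p ∈ θ s₀ := Set.mem_iInter₂.mp hp s₀ hs₀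
        obtain ⟨b, hb, hpb⟩ := hAt s₀ (hSF hs₀) p hps₀
        have hbF := hb.1
        have hbm : b ⊆ m := by
          apply hmg b hbF
          intro s hs
          have hpbs : p ∈ θ (b ∩ s) := by
            rw [hθ.inter_eq b hbF s (hSF hs)]
            exact ⟨hpb, Set.mem_iInter₂.mp hp s hs⟩
          have hne : b ∩ s ≠ ∅ := by
            intro h
            rw [h, aux_theta_empty hF hθ] at hpbs
            exact hpbs
          have hbs := hb.2.2 (b ∩ s) (hF.inter_mem b hbF s (hSF hs)) hne
            Set.inter_subset_left
          rw [← hbs]; exact Set.inter_subset_right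
        exact aux_mono hθ hbF hmF hbm hpb
    · -- Join complete
      rintro S hSF m ⟨hmF, hml, hmg⟩
      apply Set.Subset.antisymm
      · intro p hp
        obtain ⟨b, hb, hpb⟩ := hAt m hmF p hp
        have hbF := hb.1
        have hbm : b ⊆ m := by
          have hpbm : p ∈ θ (b ∩ m) := by
            rw [hθ.inter_eq b hbF m hmF]; exact ⟨hpb, hp⟩
          have hne : b ∩ m ≠ ∅ := by
            intro h
            rw [h, aux_theta_empty hF hθ] at hpbm
            exact hpbm
          have hbs := hb.2.2 (b ∩ m) (hF.inter_mem b hbF m hmF) hne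
            Set.inter_subset_left
          rw [← hbs]; exact Set.inter_subset_right
        by_cases hex : ∃ s ∈ S, b ⊆ s
        · obtain ⟨s, hs, hbs⟩ := hex
          exact Set.mem_iUnion₂.mpr ⟨s, hs, aux_mono hθ hbF (hSF hs) hbs hpb⟩
        · exfalso
          push_neg at hex
          have hdisj : ∀ s ∈ S, b ∩ s = ∅ := by
            intro s hs
            by_contra hne
            have hbs := hb.2.2 (b ∩ s) (hF.inter_mem b hbF s (hSF hs)) hne
              Set.inter_subset_left
            exact hex s hs (by rw [← hbs]; exact Set.inter_subset_right)
          have hub : ∀ s ∈ S, s ⊆ comp (adom b) m := by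
            intro s hs q hq
            refine ⟨q.1, ⟨rfl, ?_⟩, hml s hs hq⟩
            intro w hw
            have h1 : (q.1, w) ∈ m := hbm hw
            have h2 : (q.1, q.2) ∈ m := hml s hs hq
            have hwq : w = q.2 := hF.pf m hmF h1 h2
            subst hwq
            have hmem : q ∈ b ∩ s := ⟨hw, hq⟩
            rw [hdisj s hs] at hmem
            exact hmem
          have hsub : m ⊆ comp (adom b) m :=
            hmg _ (hF.comp_mem _ (hF.adom_mem b hbF) m hmF) hub
          obtain ⟨⟨u, w⟩, huw⟩ := Set.nonempty_iff_ne_empty.mpr hb.2.1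
          obtain ⟨z, ⟨hz1, hz2⟩, -⟩ := hsub (hbm huw)
          exact hz2 w huw
      · apply Set.iUnion₂_subset
        intro s hs
        exact aux_mono hθ (hSF hs) hmF (hml s hs)
  · rintro ⟨hMC, -⟩ f hf p hp
    set U : Set (Set (X × X)) := {g | g ∈ F ∧ p ∈ θ g} with hUdef
    have hUF : U ⊆ F := fun g hg => hg.1
    have hfU : f ∈ U := ⟨hf, hp⟩
    have hp' : (p.1, p.2) ∈ θ f := hp
    have key : ∀ c ∈ F, c ≠ ∅ → (∀ g ∈ U, c ⊆ g) → p ∈ θ c := by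
      intro c hcF hcne hclb
      have hh : comp (adom c) f ∈ F := hF.comp_mem _ (hF.adom_mem c hcF) f hf
      have hph : p ∉ θ (comp (adom c) f) := by
        intro hph
        have hsub : c ⊆ comp (adom c) f := hclb _ ⟨hh, hph⟩
        obtain ⟨⟨u, w⟩, huw⟩ := Set.nonempty_iff_ne_empty.mpr hcne
        obtain ⟨z, ⟨hz1, hz2⟩, -⟩ := hsub huw
        exact hz2 w huw
      rw [hθ.comp_eq _ (hF.adom_mem c hcF) f hf, hθ.adom_eq c hcF] at hph
      have hx : ∃ z, (p.1, z) ∈ θ c := by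
        by_contra hno
        push_neg at hno
        exact hph ⟨p.1, ⟨rfl, hno⟩, hp'⟩
      obtain ⟨z, hz⟩ := hx
      have hcf : θ c ⊆ θ f := aux_mono hθ hcF hf (hclb f hfU)
      have hzp : z = p.2 := hθ.pf f hf (hcf hz) hp'
      rw [hzp] at hz
      exact hz
    by_cases hex : ∃ c ∈ F, c ≠ ∅ ∧ ∀ g ∈ U, c ⊆ g
    · obtain ⟨c, hcF, hcne, hclb⟩ := hex
      have hpc : p ∈ θ c := key c hcF hcne hclb
      refine ⟨c, ⟨hcF, hcne, ?_⟩, hpc⟩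
      intro g hgF hgne hgc
      have hglb : ∀ h ∈ U, g ⊆ h := fun h hh => hgc.trans (hclb h hh)
      have hpg : p ∈ θ g := key g hgF hgne hglb
      exact Set.Subset.antisymm hgc (hclb g ⟨hgF, hpg⟩)
    · exfalso
      push_neg at hex
      have hglb : IsGLBIn F U ∅ := by
        refine ⟨aux_empty_mem hF, fun s _ => Set.empty_subset s, ?_⟩
        intro c hcF hclb
        rcases eq_or_ne c ∅ with rfl | hcne
        · exact Set.Subset.refl _
        · obtain ⟨g, hgU, hng⟩ := hex c hcF (Set.nonempty_iff_ne_empty.mpr hcne)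
          exact absurd (hclb g hgU) hng
      have hmc := hMC U hUF ⟨f, hfU⟩ ∅ hglb
      rw [aux_theta_empty hF hθ] at hmc
      have hpe : p ∈ (∅ : Set (Y × Y)) := by
        rw [hmc]
        exact Set.mem_iInter₂.mpr fun g hg => hg.2
      exact absurd hpe (Set.notMem_empty p)
end

section
/- Let F be an algebra of partial functions. If F admits a complete representation by partial functions, then F is atomic, i.e., every nonempty f ∈ F contains an atom of F. -/
open PFAlg in
/-- if an algebra of partial functions admits a complete representation by
partial functions, then it is atomic. -/
theorem stmt5 {X Y : Type*} (F : Set (Set (X × X))) (hF : IsPFAlgebra F)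
    (θ : Set (X × X) → Set (Y × Y)) (hθ : IsRep F θ)
    (hmeet : MeetComplete F θ) (hjoin : JoinComplete F θ) :
    Atomic F := by
  intro f hf hfne
  -- the empty set belongs to F
  have hempty_mem : (∅ : Set (X × X)) ∈ F := by
    have h := hF.inter_mem f hf (adom f) (hF.adom_mem f hf)
    have he : f ∩ adom f = ∅ := by
      ext ⟨x, y⟩
      simp only [Set.mem_inter_iff, Set.mem_empty_iff_false, iff_false, not_and]
      intro hxy had
      exact had.2 y hxy
    rwa [he] at h
  -- θ ∅ = ∅ by join completeness applied to the empty family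
  have hθempty : θ (∅ : Set (X × X)) = ∅ := by
    have := hjoin ∅ (Set.empty_subset F) ∅
      ⟨hempty_mem, by simp, fun c hc _ => Set.empty_subset c⟩
    simpa using this
  -- monotonicity of θ
  have mono : ∀ g ∈ F, ∀ m ∈ F, g ⊆ m → θ g ⊆ θ m := by
    intro g hg m hm hsub
    have hgm : g ∩ m = g := Set.inter_eq_left.mpr hsub
    calc θ g = θ (g ∩ m) := by rw [hgm]
      _ = θ g ∩ θ m := hθ.inter_eq g hg m hm
      _ ⊆ θ m := Set.inter_subset_right
  -- θ f is nonempty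
  have hθf_ne : (θ f).Nonempty := by
    rw [Set.nonempty_iff_ne_empty]
    intro h
    exact hfne (hθ.injOn hf hempty_mem (by rw [h, hθempty]))
  obtain ⟨p, hp⟩ := hθf_ne
  -- key lemma: restriction off the domain of g
  have key : ∀ g ∈ F, ∀ m ∈ F, g ⊆ m → p ∈ θ m → p ∉ θ g →
      p ∈ θ (comp (adom g) m) := by
    intro g hg m hm hsub hpm hpg
    rw [hθ.comp_eq (adom g) (hF.adom_mem g hg) m hm, hθ.adom_eq g hg]
    refine ⟨p.1, ⟨rfl, ?_⟩, hpm⟩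
    intro z hz
    have hzm : (p.1, z) ∈ θ m := mono g hg m hm hsub hz
    have hzeq : z = p.2 := hθ.pf m hm hzm hpm
    subst hzeq
    exact hpg (by simpa using hz)
  -- no nonempty member of F is contained in its own antidomain-restriction
  have nosub : ∀ g, g ≠ ∅ → ∀ m : Set (X × X), ¬ g ⊆ comp (adom g) m := by
    intro g hgne m hsub
    obtain ⟨⟨a, b⟩, hab⟩ := Set.nonempty_iff_ne_empty.mpr hgne
    obtain ⟨y, ⟨_, hy2⟩, _⟩ := hsub hab
    exact hy2 b hab
  -- the set of members whose image contains p
  set S : Set (Set (X × X)) := {g | g ∈ F ∧ p ∈ θ g} with hS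
  have hSF : S ⊆ F := fun g hg => hg.1
  have hfS : f ∈ S := ⟨hf, hp⟩
  -- ∅ is not the GLB of S
  have hnotglb : ¬ IsGLBIn F S (∅ : Set (X × X)) := by
    intro hglb
    have := hmeet S hSF ⟨f, hfS⟩ ∅ hglb
    rw [hθempty] at this
    have hpmem : p ∈ ⋂ s ∈ S, θ s := by
      simp only [Set.mem_iInter]
      intro s hs
      exact hs.2
    rw [← this] at hpmem
    exact hpmem
  -- hence there is a nonempty lower bound c of S
  have hc : ∃ c ∈ F, (∀ s ∈ S, c ⊆ s) ∧ c ≠ ∅ := by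
    by_contra hcon
    push_neg at hcon
    refine hnotglb ⟨hempty_mem, fun s _ => Set.empty_subset s, ?_⟩
    intro c hcF hclb
    rw [hcon c hcF hclb]
  obtain ⟨c, hcF, hclb, hcne⟩ := hc
  have hcf : c ⊆ f := hclb f hfS
  -- p ∈ θ c
  have hpc : p ∈ θ c := by
    by_contra hpc
    have hh : comp (adom c) f ∈ F :=
      hF.comp_mem (adom c) (hF.adom_mem c hcF) f hf
    have hph : p ∈ θ (comp (adom c) f) := key c hcF f hf hcf hp hpc
    have : c ⊆ comp (adom c) f := hclb _ ⟨hh, hph⟩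
    exact nosub c hcne f this
  have hcS : c ∈ S := ⟨hcF, hpc⟩
  -- c is an atom
  refine ⟨c, ⟨hcF, hcne, ?_⟩, hcf⟩
  intro g hg hgne hgc
  by_cases hpg : p ∈ θ g
  · exact Set.Subset.antisymm hgc (hclb g ⟨hg, hpg⟩)
  · exfalso
    have hh : comp (adom g) c ∈ F :=
      hF.comp_mem (adom g) (hF.adom_mem g hg) c hcF
    have hph : p ∈ θ (comp (adom g) c) := key g hg c hcF hgc hpc hpg
    have hch : c ⊆ comp (adom g) c := hclb _ ⟨hh, hph⟩
    exact nosub g hgne c (hgc.trans hch)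
end

section
/- Let F be an algebra of partial functions, let a ∈ F, and let S ⊆ F be such that the supremum ⨆S exists in (F, ⊆). Then the supremum of {s∘a : s ∈ S} exists in (F, ⊆) and equals (⨆S)∘a. That is, composition in F is completely right-distributive over joins. -/
open PFAlg in
/-- composition in an algebra of partial functions is completely
right-distributive over joins: if `⨆S` exists in `(F, ⊆)` then the supremum of
`{s∘a : s ∈ S}` exists and equals `(⨆S)∘a`. -/
theorem stmt7 {X : Type*} (F : Set (Set (X × X))) (hF : IsPFAlgebra F)
    (a : Set (X × X)) (ha : a ∈ F)
    (S : Set (Set (X × X))) (hS : S ⊆ F)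
    (m : Set (X × X)) (hm : IsLUBIn F S m) :
    IsLUBIn F ((fun s => comp s a) '' S) (comp m a) := by
  obtain ⟨hmF, hub, hlub⟩ := hm
  have hma_pf : IsPF (comp m a) := by
    rintro x y z ⟨w1, h1, h2⟩ ⟨w2, h3, h4⟩
    have hw : w1 = w2 := hF.pf m hmF h1 h3
    subst hw
    exact hF.pf a ha h2 h4
  refine ⟨hF.comp_mem m hmF a ha, ?_, ?_⟩
  · rintro _ ⟨s, hsS, rfl⟩ ⟨x, z⟩ ⟨y, hy1, hy2⟩
    exact ⟨y, hub s hsS hy1, hy2⟩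
  · intro c hcF hc
    have hmaF := hF.comp_mem m hmF a ha
    have hdF := hF.inter_mem _ hmaF c hcF
    have hadF := hF.adom_mem _ hdF
    have hqF := hF.comp_mem _ hadF _ hmaF
    have haqF := hF.adom_mem _ hqF
    have huF := hF.comp_mem _ haqF m hmF
    set q := comp (adom (comp m a ∩ c)) (comp m a) with hq
    -- every s ∈ S is contained in u = A(q) ∘ m
    have hsub : ∀ s ∈ S, s ⊆ comp (adom q) m := by
      rintro s hsS ⟨x, y⟩ hxy
      have hxym : (x, y) ∈ m := hub s hsS hxy
      refine ⟨x, ⟨rfl, ?_⟩, hxym⟩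
      rintro t ⟨w, ⟨hw_eq, hw_nd⟩, hwt⟩
      obtain rfl : x = w := hw_eq
      obtain ⟨v, hv1, hv2⟩ := hwt
      have hv : v = y := hF.pf m hmF hv1 hxym
      subst hv
      exact hw_nd t ⟨⟨v, hxym, hv2⟩, hc _ ⟨s, hsS, rfl⟩ ⟨v, hxy, hv2⟩⟩
    have hmu : m ⊆ comp (adom q) m := hlub _ huF hsub
    rintro ⟨x, z⟩ ⟨y, hxy, hyz⟩
    obtain ⟨w, ⟨hw_eq, hw_nd⟩, _⟩ := hmu hxy
    obtain rfl : x = w := hw_eq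
    by_contra hnc
    refine hw_nd z ⟨x, ⟨rfl, ?_⟩, ⟨y, hxy, hyz⟩⟩
    rintro t ⟨htma, htc⟩
    have : t = z := hma_pf htma ⟨y, hxy, hyz⟩
    exact hnc (this ▸ htc)
end

section
/- There exists an algebra of partial functions F that is atomic, together with an atom f of F, a countable family (gᵢ)_{i∈ℕ} in F whose supremum ⨆ᵢ gᵢ exists in (F, ⊆) and satisfies f∘gᵢ = ∅ for every i but f∘(⨆ᵢ gᵢ) = f ≠ ∅, and a countable family (hᵢ)_{i∈ℕ} in F whose infimum in (F, ⊆) is ∅ and satisfies f∘hᵢ = f for every i but f∘∅ = ∅. In particular, composition in F is neither completely left-distributive over joins nor completely left-distributive over meets. -/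
namespace Stmt10
open PFAlg

def diag (A : Set ℕ) : Set (ℕ × ℕ) := {p | p.1 = p.2 ∧ p.1 ∈ A}

def fhat : Set (ℕ × ℕ) := {((1:ℕ), (0:ℕ))}

def B : Set (Set ℕ) := {A | (A.Finite ∧ 0 ∉ A) ∨ (Aᶜ.Finite ∧ 0 ∈ A)}

def F : Set (Set (ℕ × ℕ)) := insert fhat (diag '' B)

lemma fhat_ne_diag (A : Set ℕ) : fhat ≠ diag A := by
  intro h
  have : ((1:ℕ),(0:ℕ)) ∈ diag A := h ▸ rfl
  exact one_ne_zero this.1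

lemma mem_F_iff {s : Set (ℕ × ℕ)} : s ∈ F ↔ s = fhat ∨ ∃ A ∈ B, s = diag A := by
  simp [F, Set.mem_insert_iff, Set.mem_image]
  constructor
  · rintro (h | ⟨A, hA, rfl⟩); exact Or.inl h; exact Or.inr ⟨A, hA, rfl⟩
  · rintro (h | ⟨A, hA, rfl⟩); exact Or.inl h; exact Or.inr ⟨A, hA, rfl⟩

lemma diag_mem_F {A : Set ℕ} (h : A ∈ B) : diag A ∈ F :=
  mem_F_iff.2 (Or.inr ⟨A, h, rfl⟩)

lemma fhat_mem_F : fhat ∈ F := mem_F_iff.2 (Or.inl rfl)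

-- B facts
lemma B_empty : (∅ : Set ℕ) ∈ B := Or.inl ⟨Set.finite_empty, by simp⟩
lemma B_univ : (Set.univ : Set ℕ) ∈ B := Or.inr ⟨by simp, trivial⟩
lemma B_inter {A A' : Set ℕ} (h : A ∈ B) (h' : A' ∈ B) : A ∩ A' ∈ B := by
  rcases h with ⟨hf, h0⟩ | ⟨hf, h0⟩
  · exact Or.inl ⟨hf.inter_of_left _, fun hx => h0 hx.1⟩
  · rcases h' with ⟨hf', h0'⟩ | ⟨hf', h0'⟩
    · exact Or.inl ⟨hf'.inter_of_right _, fun hx => h0' hx.2⟩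
    · refine Or.inr ⟨?_, ⟨h0, h0'⟩⟩
      rw [Set.compl_inter]; exact hf.union hf'
lemma B_compl {A : Set ℕ} (h : A ∈ B) : Aᶜ ∈ B := by
  rcases h with ⟨hf, h0⟩ | ⟨hf, h0⟩
  · exact Or.inr ⟨by simpa using hf, h0⟩
  · exact Or.inl ⟨hf, by simpa using h0⟩
lemma B_singleton {n : ℕ} (hn : n ≠ 0) : ({n} : Set ℕ) ∈ B :=
  Or.inl ⟨Set.finite_singleton n, by simp [Ne.symm hn]⟩

-- comp / inter / adom computations
lemma comp_diag_diag (A A' : Set ℕ) : comp (diag A) (diag A') = diag (A ∩ A') := by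
  ext ⟨x, z⟩
  simp only [comp, diag, Set.mem_setOf_eq, Set.mem_inter_iff]
  constructor
  · rintro ⟨y, ⟨rfl, hx⟩, rfl, hy⟩; exact ⟨rfl, hx, hy⟩
  · rintro ⟨rfl, hx, hx'⟩; exact ⟨x, ⟨rfl, hx⟩, rfl, hx'⟩

lemma adom_diag (A : Set ℕ) : adom (diag A) = diag Aᶜ := by
  ext ⟨x, z⟩
  simp only [adom, diag, Set.mem_setOf_eq, Set.mem_compl_iff]
  constructor
  · rintro ⟨rfl, h⟩; exact ⟨rfl, fun hx => h x ⟨rfl, hx⟩⟩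
  · rintro ⟨rfl, hx⟩; exact ⟨rfl, fun y hy => hx (hy.1 ▸ hy.2)⟩

lemma comp_fhat_diag_mem {A : Set ℕ} (h : 0 ∈ A) : comp fhat (diag A) = fhat := by
  ext ⟨x, z⟩
  simp only [comp, fhat, diag, Set.mem_singleton_iff, Set.mem_setOf_eq, Prod.mk.injEq,
    Prod.ext_iff]
  constructor
  · rintro ⟨y, ⟨rfl, rfl⟩, rfl, -⟩; exact ⟨rfl, rfl⟩
  · rintro ⟨rfl, rfl⟩; exact ⟨0, ⟨rfl, rfl⟩, rfl, h⟩

lemma comp_fhat_diag_not_mem {A : Set ℕ} (h : 0 ∉ A) : comp fhat (diag A) = ∅ := by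
  ext ⟨x, z⟩
  simp only [comp, fhat, diag, Set.mem_singleton_iff, Set.mem_setOf_eq, Prod.ext_iff,
    Set.mem_empty_iff_false, iff_false]
  rintro ⟨y, ⟨rfl, rfl⟩, rfl, h0⟩; exact h h0

lemma comp_diag_fhat_mem {A : Set ℕ} (h : 1 ∈ A) : comp (diag A) fhat = fhat := by
  ext ⟨x, z⟩
  simp only [comp, fhat, diag, Set.mem_singleton_iff, Set.mem_setOf_eq, Prod.ext_iff]
  constructor
  · rintro ⟨y, ⟨rfl, -⟩, rfl, rfl⟩; exact ⟨rfl, rfl⟩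
  · rintro ⟨rfl, rfl⟩; exact ⟨1, ⟨rfl, h⟩, rfl, rfl⟩

lemma comp_diag_fhat_not_mem {A : Set ℕ} (h : 1 ∉ A) : comp (diag A) fhat = ∅ := by
  ext ⟨x, z⟩
  simp only [comp, fhat, diag, Set.mem_singleton_iff, Set.mem_setOf_eq, Prod.ext_iff,
    Set.mem_empty_iff_false, iff_false]
  rintro ⟨y, ⟨rfl, hx⟩, rfl, rfl⟩; exact h hx

lemma comp_fhat_fhat : comp fhat fhat = ∅ := by
  ext ⟨x, z⟩
  simp only [comp, fhat, Set.mem_singleton_iff, Prod.ext_iff, Set.mem_empty_iff_false, iff_false]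
  rintro ⟨y, ⟨rfl, rfl⟩, h, -⟩; exact one_ne_zero h.symm

lemma inter_fhat_diag (A : Set ℕ) : fhat ∩ diag A = ∅ := by
  ext ⟨x, z⟩
  simp only [fhat, diag, Set.mem_inter_iff, Set.mem_singleton_iff, Set.mem_setOf_eq,
    Prod.ext_iff, Set.mem_empty_iff_false, iff_false]
  rintro ⟨⟨rfl, rfl⟩, h, -⟩; exact one_ne_zero h

lemma adom_fhat : adom fhat = diag ({1}ᶜ : Set ℕ) := by
  ext ⟨x, z⟩
  simp only [adom, fhat, diag, Set.mem_setOf_eq, Set.mem_singleton_iff, Set.mem_compl_iff,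
    Prod.ext_iff]
  constructor
  · rintro ⟨rfl, h⟩
    refine ⟨rfl, fun hx => h 0 ⟨hx, rfl⟩⟩
  · rintro ⟨rfl, hx⟩
    exact ⟨rfl, fun y hy => hx hy.1⟩

lemma diag_empty : diag (∅ : Set ℕ) = ∅ := by ext ⟨x, z⟩; simp [diag]

lemma diag_ne_empty {A : Set ℕ} (h : A.Nonempty) : diag A ≠ ∅ := by
  obtain ⟨a, ha⟩ := h
  intro hd
  have : (a, a) ∈ diag A := ⟨rfl, ha⟩
  simpa [hd] using this

lemma diag_subset {A A' : Set ℕ} (h : diag A ⊆ diag A') : A ⊆ A' := fun a ha =>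
  (h (show (a,a) ∈ diag A from ⟨rfl, ha⟩)).2

lemma diag_mono {A A' : Set ℕ} (h : A ⊆ A') : diag A ⊆ diag A' := by
  rintro ⟨x, z⟩ ⟨hxz, hx⟩; exact ⟨hxz, h hx⟩

lemma fhat_not_subset_diag (A : Set ℕ) : ¬ fhat ⊆ diag A := by
  intro h
  exact one_ne_zero (h (show ((1:ℕ),(0:ℕ)) ∈ fhat from rfl)).1

-- F is an algebra
lemma F_alg : IsPFAlgebra F := by
  constructor
  · exact ⟨fhat, fhat_mem_F⟩
  · intro f hf
    rcases mem_F_iff.1 hf with rfl | ⟨A, hA, rfl⟩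
    · rintro x y z hy hz
      simp only [fhat, Set.mem_singleton_iff, Prod.ext_iff] at hy hz
      rw [hy.2, hz.2]
    · rintro x y z ⟨hy, -⟩ ⟨hz, -⟩
      exact hy.symm.trans hz
  · intro f hf g hg
    rcases mem_F_iff.1 hf with rfl | ⟨A, hA, rfl⟩ <;>
      rcases mem_F_iff.1 hg with rfl | ⟨A', hA', rfl⟩
    · rw [comp_fhat_fhat, ← diag_empty]; exact diag_mem_F B_empty
    · by_cases h0 : 0 ∈ A'
      · rw [comp_fhat_diag_mem h0]; exact fhat_mem_F
      · rw [comp_fhat_diag_not_mem h0, ← diag_empty]; exact diag_mem_F B_empty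
    · by_cases h1 : 1 ∈ A
      · rw [comp_diag_fhat_mem h1]; exact fhat_mem_F
      · rw [comp_diag_fhat_not_mem h1, ← diag_empty]; exact diag_mem_F B_empty
    · rw [comp_diag_diag]; exact diag_mem_F (B_inter hA hA')
  · intro f hf g hg
    rcases mem_F_iff.1 hf with rfl | ⟨A, hA, rfl⟩ <;>
      rcases mem_F_iff.1 hg with rfl | ⟨A', hA', rfl⟩
    · rw [Set.inter_self]; exact fhat_mem_F
    · rw [inter_fhat_diag, ← diag_empty]; exact diag_mem_F B_empty
    · rw [Set.inter_comm, inter_fhat_diag, ← diag_empty]; exact diag_mem_F B_empty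
    · have : diag A ∩ diag A' = diag (A ∩ A') := by
        ext ⟨x, z⟩
        simp only [diag, Set.mem_inter_iff, Set.mem_setOf_eq]
        tauto
      rw [this]; exact diag_mem_F (B_inter hA hA')
  · intro f hf
    rcases mem_F_iff.1 hf with rfl | ⟨A, hA, rfl⟩
    · rw [adom_fhat]; exact diag_mem_F (B_compl (B_singleton one_ne_zero))
    · rw [adom_diag]; exact diag_mem_F (B_compl hA)

lemma atom_fhat : IsAtomOf F fhat := by
  refine ⟨fhat_mem_F, ?_, ?_⟩
  · intro h
    have : ((1:ℕ),(0:ℕ)) ∈ fhat := rfl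
    simpa [h] using this
  · intro g hg hne hsub
    rcases mem_F_iff.1 hg with rfl | ⟨A, hA, rfl⟩
    · rfl
    · exfalso
      obtain ⟨⟨x, z⟩, hxz, hxA⟩ := Set.nonempty_iff_ne_empty.2 hne
      have h2 := hsub ⟨hxz, hxA⟩
      simp only [fhat, Set.mem_singleton_iff, Prod.ext_iff] at h2
      simp only [diag, Set.mem_setOf_eq] at hxz
      omega

lemma atom_diag_singleton {n : ℕ} (hn : n ≠ 0) : IsAtomOf F (diag {n}) := by
  refine ⟨diag_mem_F (B_singleton hn), diag_ne_empty ⟨n, rfl⟩, ?_⟩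
  intro g hg hne hsub
  rcases mem_F_iff.1 hg with rfl | ⟨A, hA, rfl⟩
  · exact absurd hsub (fhat_not_subset_diag _)
  · have hAsub : A ⊆ {n} := diag_subset hsub
    obtain ⟨⟨x, z⟩, hxz, hxA⟩ := Set.nonempty_iff_ne_empty.2 hne
    have hAne : A.Nonempty := ⟨x, hxA⟩
    rw [(hAne.subset_singleton_iff.1 hAsub : A = {n})]

lemma F_atomic : Atomic F := by
  intro f hf hne
  rcases mem_F_iff.1 hf with rfl | ⟨A, hA, rfl⟩
  · exact ⟨fhat, atom_fhat, subset_rfl⟩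
  · have hAne : A.Nonempty := by
      by_contra h
      rw [Set.not_nonempty_iff_eq_empty] at h
      exact hne (by rw [h, diag_empty])
    have : ∃ n ∈ A, n ≠ 0 := by
      rcases hA with ⟨hfin, h0⟩ | ⟨hfin, h0⟩
      · obtain ⟨a, ha⟩ := hAne
        exact ⟨a, ha, fun h => h0 (h ▸ ha)⟩
      · have hinf : A.Infinite := by
          intro hAA
          exact Set.infinite_univ (by
            have := hAA.union hfin
            simpa using this)
        obtain ⟨n, hn, hn0⟩ := (hinf.diff (Set.finite_singleton 0)).nonempty
        exact ⟨n, hn, by simpa using hn0⟩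
    obtain ⟨n, hn, hn0⟩ := this
    exact ⟨diag {n}, atom_diag_singleton hn0, diag_mono (by simpa using hn)⟩

end Stmt10

namespace Stmt10
open PFAlg

lemma comp_empty_right (f : Set (ℕ × ℕ)) : comp f (∅ : Set (ℕ × ℕ)) = ∅ := by
  ext ⟨x, z⟩; simp [comp]

def gfam (i : ℕ) : Set (ℕ × ℕ) := diag {i + 1}

def hfam (i : ℕ) : Set (ℕ × ℕ) := diag ({0} ∪ {n | i < n})

lemma gfam_mem (i : ℕ) : gfam i ∈ F := diag_mem_F (B_singleton (Nat.succ_ne_zero i))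

lemma hfam_B (i : ℕ) : ({0} ∪ {n | i < n} : Set ℕ) ∈ B := by
  refine Or.inr ⟨Set.Finite.subset (Set.finite_Iic i) ?_, Or.inl rfl⟩
  intro n hn
  simp only [Set.mem_compl_iff, Set.mem_union, Set.mem_singleton_iff, Set.mem_setOf_eq,
    not_or, not_lt] at hn
  exact hn.2

lemma hfam_mem (i : ℕ) : hfam i ∈ F := diag_mem_F (hfam_B i)

lemma comp_fhat_gfam (i : ℕ) : comp fhat (gfam i) = ∅ :=
  comp_fhat_diag_not_mem (by simp)

lemma comp_fhat_hfam (i : ℕ) : comp fhat (hfam i) = fhat :=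
  comp_fhat_diag_mem (Or.inl rfl)

lemma lub_gfam : IsLUBIn F (Set.range gfam) (diag Set.univ) := by
  refine ⟨diag_mem_F B_univ, ?_, ?_⟩
  · rintro s ⟨i, rfl⟩
    exact diag_mono (Set.subset_univ _)
  · intro c hc hub
    rcases mem_F_iff.1 hc with rfl | ⟨A, hA, rfl⟩
    · exfalso
      have h1 : gfam 0 ⊆ fhat := hub _ ⟨0, rfl⟩
      have : ((1 : ℕ), (1 : ℕ)) ∈ fhat := h1 ⟨rfl, rfl⟩
      simp only [fhat, Set.mem_singleton_iff, Prod.ext_iff] at this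
      exact one_ne_zero this.2
    · have hin : ∀ i : ℕ, i + 1 ∈ A := fun i =>
        (diag_subset (hub _ ⟨i, rfl⟩)) rfl
      refine diag_mono fun n _ => ?_
      rcases hA with ⟨hfin, h0⟩ | ⟨hfin, h0⟩
      · exact absurd hfin (Set.infinite_of_injective_forall_mem
          (f := fun i : ℕ => i + 1) (fun a b h => Nat.add_right_cancel h) hin)
      · cases n with
        | zero => exact h0
        | succ k => exact hin k

lemma glb_hfam : IsGLBIn F (Set.range hfam) (∅ : Set (ℕ × ℕ)) := by
  refine ⟨diag_empty ▸ diag_mem_F B_empty, fun s _ => Set.empty_subset s, ?_⟩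
  intro c hc hlb
  rcases mem_F_iff.1 hc with rfl | ⟨A, hA, rfl⟩
  · exfalso
    have h1 : fhat ⊆ hfam 0 := hlb _ ⟨0, rfl⟩
    have : ((1 : ℕ), (0 : ℕ)) ∈ hfam 0 := h1 rfl
    exact one_ne_zero this.1
  · have hsub : ∀ i, A ⊆ {0} ∪ {n | i < n} := fun i => diag_subset (hlb _ ⟨i, rfl⟩)
    have hA0 : A ⊆ {0} := by
      intro a ha
      rcases hsub a ha with h | h
      · exact h
      · exact absurd h (by simp)
    have : A = ∅ := by
      rcases hA with ⟨-, h0⟩ | ⟨hfin, h0⟩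
      · ext a
        simp only [Set.mem_empty_iff_false, iff_false]
        intro ha
        exact h0 (hA0 ha ▸ ha)
      · exfalso
        have hAeq : A = {0} := (Set.Nonempty.subset_singleton_iff ⟨0, h0⟩).1 hA0
        refine Set.infinite_of_injective_forall_mem
          (f := fun i : ℕ => i + 1) (fun a b h => Nat.add_right_cancel h) ?_ hfin
        intro a
        simp [hAeq]
    rw [this, diag_empty]

end Stmt10

open PFAlg in
/-- there is an atomic algebra of partial functions `F`, an atom `f`,
a countable family `(gᵢ)` with supremum `m` in `(F, ⊆)` such that `f∘gᵢ = ∅` for all `i`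
but `f∘m = f ≠ ∅`, and a countable family `(hᵢ)` with infimum `∅` in `(F, ⊆)` such that
`f∘hᵢ = f` for all `i` but `f∘∅ = ∅`.  In particular, composition in `F` is neither
completely left-distributive over joins nor over meets. -/
theorem stmt10 :
    ∃ (X : Type) (F : Set (Set (X × X))), IsPFAlgebra F ∧ Atomic F ∧
      ∃ f, IsAtomOf F f ∧ f ≠ ∅ ∧
        (∃ g : ℕ → Set (X × X), (∀ i, g i ∈ F) ∧
          ∃ m, IsLUBIn F (Set.range g) m ∧ (∀ i, comp f (g i) = ∅) ∧ comp f m = f) ∧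
        (∃ h : ℕ → Set (X × X), (∀ i, h i ∈ F) ∧ IsGLBIn F (Set.range h) ∅ ∧
          (∀ i, comp f (h i) = f) ∧ comp f (∅ : Set (X × X)) = ∅) ∧
        ¬ CompLeftDistribJoins F ∧ ¬ CompLeftDistribMeets F := by
    classical
  refine ⟨ℕ, Stmt10.F, Stmt10.F_alg, Stmt10.F_atomic, Stmt10.fhat, Stmt10.atom_fhat,
    Stmt10.atom_fhat.2.1, ⟨Stmt10.gfam, Stmt10.gfam_mem, Stmt10.diag Set.univ,
      Stmt10.lub_gfam, Stmt10.comp_fhat_gfam,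
      Stmt10.comp_fhat_diag_mem (Set.mem_univ 0)⟩,
    ⟨Stmt10.hfam, Stmt10.hfam_mem, Stmt10.glb_hfam, Stmt10.comp_fhat_hfam,
      Stmt10.comp_empty_right _⟩, ?_, ?_⟩
  · intro H
    have hFsub : Set.range Stmt10.gfam ⊆ Stmt10.F := by
      rintro s ⟨i, rfl⟩; exact Stmt10.gfam_mem i
    have hL := H Stmt10.fhat Stmt10.fhat_mem_F _ hFsub _ Stmt10.lub_gfam
    have himg : ∀ s ∈ (fun s => comp Stmt10.fhat s) '' Set.range Stmt10.gfam,
        s ⊆ (∅ : Set (ℕ × ℕ)) := by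
      rintro s ⟨-, ⟨i, rfl⟩, rfl⟩
      dsimp only
      rw [Stmt10.comp_fhat_gfam]
    have hsub := hL.2.2 ∅ (Stmt10.diag_empty ▸ Stmt10.diag_mem_F Stmt10.B_empty) himg
    rw [Stmt10.comp_fhat_diag_mem (Set.mem_univ 0)] at hsub
    exact hsub (show ((1:ℕ),(0:ℕ)) ∈ Stmt10.fhat from rfl)
  · intro H
    have hFsub : Set.range Stmt10.hfam ⊆ Stmt10.F := by
      rintro s ⟨i, rfl⟩; exact Stmt10.hfam_mem i
    have hG := H Stmt10.fhat Stmt10.fhat_mem_F _ hFsub ⟨_, ⟨0, rfl⟩⟩ _ Stmt10.glb_hfam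
    have himg : ∀ s ∈ (fun s => comp Stmt10.fhat s) '' Set.range Stmt10.hfam,
        Stmt10.fhat ⊆ s := by
      rintro s ⟨-, ⟨i, rfl⟩, rfl⟩
      dsimp only
      rw [Stmt10.comp_fhat_hfam]
    have hsub := hG.2.2 Stmt10.fhat Stmt10.fhat_mem_F himg
    rw [Stmt10.comp_empty_right] at hsub
    exact hsub (show ((1:ℕ),(0:ℕ)) ∈ Stmt10.fhat from rfl)
end

section
/- There exists an algebra of partial functions F that is atomic but admits no complete representation by partial functions and no atomic representation by partial functions. Hence an atomic, representable (∘, ⊓, A)-algebra need not be completely representable. -/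
namespace Stmt11

open PFAlg

abbrev XX := Option ℕ

/-- partial identity on a set `S`. -/
def dg (S : Set XX) : Set (XX × XX) := {p | p.1 = p.2 ∧ p.1 ∈ S}

/-- the partial function `{(some 0, none)}`. -/
def aF : Set (XX × XX) := {((some 0 : XX), (none : XX))}

/-- the domain Boolean algebra: finite sets of naturals, or cofinite sets containing `none`. -/
def DD : Set (Set XX) := {S | (S.Finite ∧ none ∉ S) ∨ (Sᶜ.Finite ∧ none ∈ S)}

/-- the algebra of partial functions. -/
def FF : Set (Set (XX × XX)) := {g | (∃ S ∈ DD, g = dg S) ∨ g = aF}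

lemma mem_dg {S : Set XX} {x y : XX} : (x, y) ∈ dg S ↔ x = y ∧ x ∈ S := Iff.rfl

lemma mem_aF {x y : XX} : (x, y) ∈ aF ↔ x = some 0 ∧ y = none := by
  simp [aF, Prod.ext_iff]

lemma dg_mem {S : Set XX} (hS : S ∈ DD) : dg S ∈ FF := Or.inl ⟨S, hS, rfl⟩

lemma aF_mem : aF ∈ FF := Or.inr rfl

lemma dg_mono {S T : Set XX} (h : S ⊆ T) : dg S ⊆ dg T := by
  rintro ⟨x, y⟩ ⟨h1, h2⟩; exact ⟨h1, h h2⟩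

lemma dg_subset {S T : Set XX} (h : dg S ⊆ dg T) : S ⊆ T := by
  intro x hx; exact (h (show (x, x) ∈ dg S from ⟨rfl, hx⟩)).2

lemma dg_inj {S T : Set XX} (h : dg S = dg T) : S = T :=
  le_antisymm (dg_subset h.le) (dg_subset h.ge)

lemma dg_empty : dg (∅ : Set XX) = ∅ := by
  ext ⟨x, y⟩; simp [mem_dg]

lemma dg_ne_empty {S : Set XX} (h : S.Nonempty) : dg S ≠ ∅ := by
  obtain ⟨x, hx⟩ := h
  intro he
  have : (x, x) ∈ dg S := ⟨rfl, hx⟩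
  rw [he] at this; exact this

lemma aF_ne_dg {S : Set XX} : aF ≠ dg S := by
  intro h
  have : ((some 0 : XX), (none : XX)) ∈ dg S := h ▸ rfl
  exact Option.some_ne_none 0 this.1

lemma empty_mem_DD : (∅ : Set XX) ∈ DD := Or.inl ⟨Set.finite_empty, fun h => h⟩

lemma univ_mem_DD : (Set.univ : Set XX) ∈ DD := Or.inr ⟨by simp, trivial⟩

lemma singleton_mem_DD (n : ℕ) : ({some n} : Set XX) ∈ DD :=
  Or.inl ⟨Set.finite_singleton _, by simp⟩

lemma DD_inter {S T : Set XX} (hS : S ∈ DD) (hT : T ∈ DD) : S ∩ T ∈ DD := by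
  rcases hS with hS | hS
  · exact Or.inl ⟨hS.1.subset Set.inter_subset_left, fun h => hS.2 h.1⟩
  · rcases hT with hT | hT
    · exact Or.inl ⟨hT.1.subset Set.inter_subset_right, fun h => hT.2 h.2⟩
    · exact Or.inr ⟨by rw [Set.compl_inter]; exact hS.1.union hT.1, ⟨hS.2, hT.2⟩⟩

lemma DD_compl {S : Set XX} (hS : S ∈ DD) : Sᶜ ∈ DD := by
  rcases hS with hS | hS
  · exact Or.inr ⟨by rw [compl_compl]; exact hS.1, hS.2⟩
  · exact Or.inl ⟨hS.1, fun h => h hS.2⟩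

lemma exists_some_mem {S : Set XX} (h : Sᶜ.Finite) : ∃ n : ℕ, some n ∈ S := by
  have hinf : (Set.range (Option.some : ℕ → XX)).Infinite :=
    Set.infinite_range_of_injective (Option.some_injective ℕ)
  obtain ⟨x, hx⟩ := (hinf.diff h).nonempty
  obtain ⟨n, rfl⟩ := hx.1
  exact ⟨n, not_not.mp hx.2⟩

lemma DD_has_some {S : Set XX} (hS : S ∈ DD) (hne : S.Nonempty) : ∃ n : ℕ, some n ∈ S := by
  rcases hS with hS | hS
  · obtain ⟨x, hx⟩ := hne
    match x with
    | none => exact absurd hx hS.2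
    | some n => exact ⟨n, hx⟩
  · exact exists_some_mem hS.1

/-! ### Computation lemmas -/

lemma comp_dg_dg (S T : Set XX) : comp (dg S) (dg T) = dg (S ∩ T) := by
  ext ⟨x, z⟩
  constructor
  · rintro ⟨y, ⟨h1, h2⟩, ⟨h3, h4⟩⟩
    exact ⟨h1.trans h3, h2, h1 ▸ h4⟩
  · rintro ⟨h1, h2, h3⟩
    exact ⟨x, ⟨rfl, h2⟩, ⟨h1, h3⟩⟩

lemma inter_dg_dg (S T : Set XX) : dg S ∩ dg T = dg (S ∩ T) := by
  ext ⟨x, z⟩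
  constructor
  · rintro ⟨⟨h1, h2⟩, ⟨h3, h4⟩⟩; exact ⟨h1, h2, h4⟩
  · rintro ⟨h1, h2, h3⟩; exact ⟨⟨h1, h2⟩, ⟨h1, h3⟩⟩

lemma adom_dg (S : Set XX) : adom (dg S) = dg Sᶜ := by
  ext ⟨x, z⟩
  constructor
  · rintro ⟨h1, h2⟩
    refine ⟨h1, fun hx => h2 x ⟨rfl, hx⟩⟩
  · rintro ⟨h1, h2⟩
    exact ⟨h1, fun y hy => h2 hy.2⟩

lemma comp_aF_dg_of_mem {S : Set XX} (h : none ∈ S) : comp aF (dg S) = aF := by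
  ext ⟨x, z⟩
  constructor
  · rintro ⟨y, hy1, hy2, hy3⟩
    rw [mem_aF] at hy1
    rw [mem_aF]
    have hy2' : y = z := hy2
    exact ⟨hy1.1, hy2'.symm.trans hy1.2⟩
  · intro hx
    rw [mem_aF] at hx
    refine ⟨none, by rw [mem_aF]; exact ⟨hx.1, rfl⟩, ?_, h⟩
    show (none : XX) = z
    exact hx.2.symm

lemma comp_aF_dg_of_not_mem {S : Set XX} (h : none ∉ S) : comp aF (dg S) = ∅ := by
  ext ⟨x, z⟩
  simp only [Set.mem_empty_iff_false, iff_false]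
  rintro ⟨y, hy1, hy2, hy3⟩
  rw [mem_aF] at hy1
  exact h (hy1.2 ▸ hy3)

lemma comp_dg_aF (S : Set XX) : comp (dg S) aF = aF ∨ comp (dg S) aF = ∅ := by
  by_cases h : (some 0 : XX) ∈ S
  · left
    ext ⟨x, z⟩
    constructor
    · rintro ⟨y, ⟨h1, h2⟩, hy⟩
      rw [mem_aF] at hy; rw [mem_aF]
      exact ⟨h1.trans hy.1, hy.2⟩
    · intro hx
      rw [mem_aF] at hx
      exact ⟨x, ⟨rfl, hx.1 ▸ h⟩, by rw [mem_aF]; exact hx⟩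
  · right
    ext ⟨x, z⟩
    simp only [Set.mem_empty_iff_false, iff_false]
    rintro ⟨y, ⟨h1, h2⟩, hy⟩
    rw [mem_aF] at hy
    exact h ((h1.trans hy.1) ▸ h2)

lemma comp_aF_aF : comp aF aF = ∅ := by
  ext ⟨x, z⟩
  simp only [Set.mem_empty_iff_false, iff_false]
  rintro ⟨y, hy1, hy2⟩
  rw [mem_aF] at hy1 hy2
  exact Option.some_ne_none 0 (hy2.1.symm.trans hy1.2)

lemma inter_aF_dg (S : Set XX) : aF ∩ dg S = ∅ := by
  ext ⟨x, z⟩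
  simp only [Set.mem_empty_iff_false, iff_false]
  rintro ⟨h1, h2, h3⟩
  rw [mem_aF] at h1
  exact Option.some_ne_none 0 (h1.1 ▸ h1.2 ▸ h2)

lemma adom_aF : adom aF = dg ({some 0}ᶜ : Set XX) := by
  ext ⟨x, z⟩
  constructor
  · rintro ⟨h1, h2⟩
    refine ⟨h1, fun hx => h2 none (by rw [mem_aF]; exact ⟨hx, rfl⟩)⟩
  · rintro ⟨h1, h2⟩
    refine ⟨h1, fun y hy => h2 ((mem_aF.mp hy).1)⟩

lemma pf_dg (S : Set XX) : IsPF (dg S) := by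
  rintro x y z ⟨h1, _⟩ ⟨h2, _⟩; exact h1.symm.trans h2

lemma pf_aF : IsPF aF := by
  rintro x y z h1 h2
  rw [mem_aF] at h1 h2
  exact h1.2.trans h2.2.symm

/-! ### FF is an algebra -/

lemma FF_alg : IsPFAlgebra FF where
  nonempty := ⟨aF, aF_mem⟩
  pf := by
    rintro f (⟨S, hS, rfl⟩ | rfl)
    · exact pf_dg S
    · exact pf_aF
  comp_mem := by
    rintro f (⟨S, hS, rfl⟩ | rfl) g (⟨T, hT, rfl⟩ | rfl)
    · rw [comp_dg_dg]; exact dg_mem (DD_inter hS hT)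
    · rcases comp_dg_aF S with h | h
      · rw [h]; exact aF_mem
      · rw [h, ← dg_empty]; exact dg_mem empty_mem_DD
    · by_cases h : none ∈ T
      · rw [comp_aF_dg_of_mem h]; exact aF_mem
      · rw [comp_aF_dg_of_not_mem h, ← dg_empty]; exact dg_mem empty_mem_DD
    · rw [comp_aF_aF, ← dg_empty]; exact dg_mem empty_mem_DD
  inter_mem := by
    rintro f (⟨S, hS, rfl⟩ | rfl) g (⟨T, hT, rfl⟩ | rfl)
    · rw [inter_dg_dg]; exact dg_mem (DD_inter hS hT)
    · rw [Set.inter_comm, inter_aF_dg, ← dg_empty]; exact dg_mem empty_mem_DD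
    · rw [inter_aF_dg, ← dg_empty]; exact dg_mem empty_mem_DD
    · rw [Set.inter_self]; exact aF_mem
  adom_mem := by
    rintro f (⟨S, hS, rfl⟩ | rfl)
    · rw [adom_dg]; exact dg_mem (DD_compl hS)
    · rw [adom_aF]; exact dg_mem (DD_compl (singleton_mem_DD 0))

/-! ### Atoms -/

lemma singleton_atom (n : ℕ) : IsAtomOf FF (dg {some n}) := by
  refine ⟨dg_mem (singleton_mem_DD n), dg_ne_empty ⟨some n, rfl⟩, ?_⟩
  rintro g (⟨T, hT, rfl⟩ | rfl) hne hsub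
  · have hT' : T ⊆ {some n} := dg_subset hsub
    have : T.Nonempty := by
      rcases Set.eq_empty_or_nonempty T with h | h
      · exact absurd (h ▸ dg_empty) hne
      · exact h
    rw [Set.Nonempty.subset_singleton_iff this |>.mp hT']
  · exfalso
    have : ((some 0 : XX), (none : XX)) ∈ dg {some n} := hsub rfl
    exact Option.some_ne_none 0 this.1

lemma aF_atom : IsAtomOf FF aF := by
  refine ⟨aF_mem, ?_, ?_⟩
  · intro h
    have : ((some 0 : XX), (none : XX)) ∈ aF := rfl
    rw [h] at this; exact this
  · rintro g (⟨T, hT, rfl⟩ | rfl) hne hsub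
    · exfalso
      apply hne
      have : T = ∅ := by
        ext x
        simp only [Set.mem_empty_iff_false, iff_false]
        intro hx
        have := hsub (show (x, x) ∈ dg T from ⟨rfl, hx⟩)
        rw [mem_aF] at this
        exact Option.some_ne_none 0 (this.1 ▸ this.2)
      rw [this, dg_empty]
    · rfl

lemma FF_atomic : Atomic FF := by
  rintro f (⟨S, hS, rfl⟩ | rfl) hne
  · have hSne : S.Nonempty := by
      rcases Set.eq_empty_or_nonempty S with h | h
      · exact absurd (h ▸ dg_empty) hne
      · exact h
    obtain ⟨n, hn⟩ := DD_has_some hS hSne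
    exact ⟨dg {some n}, singleton_atom n, dg_mono (by simpa using hn)⟩
  · exact ⟨aF, aF_atom, le_refl _⟩

/-! ### Representation facts -/

variable {X' : Type} {Y : Type*}

lemma rep_theta_empty {F : Set (Set (X' × X'))} {θ : Set (X' × X') → Set (Y × Y)}
    (h : IsRep F θ) (h0 : (∅ : Set (X' × X')) ∈ F) (h1 : adom (∅ : Set (X' × X')) ∈ F) :
    θ ∅ = ∅ := by
  set t := adom (∅ : Set (X' × X')) with ht
  have h2 : adom t = (∅ : Set (X' × X')) := by
    ext p
    simp only [Set.mem_empty_iff_false, iff_false]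
    rintro ⟨he, hall⟩
    exact hall p.1 ⟨rfl, fun y hy => hy⟩
  have hsub : θ ∅ ⊆ θ t := by
    have he : (∅ : Set (X' × X')) = ∅ ∩ t := by simp
    have := h.inter_eq ∅ h0 t h1
    rw [← he] at this
    rw [this]
    exact Set.inter_subset_right
  have h3 : θ (∅ : Set (X' × X')) = adom (θ t) := by
    rw [← h.adom_eq t h1, h2]
  ext p
  simp only [Set.mem_empty_iff_false, iff_false]
  intro hp
  have hpt := hsub hp
  rw [h3] at hp
  obtain ⟨heq, hall⟩ := hp
  exact hall p.2 (by rwa [show (p.1, p.2) = p from rfl])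

lemma rep_mono {F : Set (Set (X' × X'))} {θ : Set (X' × X') → Set (Y × Y)}
    (h : IsRep F θ) {b m : Set (X' × X')} (hb : b ∈ F) (hm : m ∈ F) (hsub : b ⊆ m) :
    θ b ⊆ θ m := by
  have : b = b ∩ m := (Set.inter_eq_left.mpr hsub).symm
  rw [this, h.inter_eq b hb m hm]
  exact Set.inter_subset_right

/-! ### The key obstruction -/

/-- every atom of `FF` below `dg univ` composes to `∅` with `aF` on the left. -/
lemma atom_below_m_kills {b : Set (XX × XX)} (hb : IsAtomOf FF b)
    (hsub : b ⊆ dg Set.univ) : comp aF b = ∅ := by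
  obtain ⟨hbF, hbne, hbmin⟩ := hb
  rcases hbF with ⟨S, hS, rfl⟩ | rfl
  · by_cases h : none ∈ S
    · exfalso
      have hScof : Sᶜ.Finite := by
        rcases hS with hS | hS
        · exact absurd h hS.2
        · exact hS.1
      obtain ⟨n, hn⟩ := exists_some_mem hScof
      have heq := hbmin (dg {some n}) (dg_mem (singleton_mem_DD n))
        (dg_ne_empty ⟨some n, rfl⟩) (dg_mono (by simpa using hn))
      have : S = {some n} := (dg_inj heq).symm
      rw [this] at h
      exact Option.some_ne_none n (Set.mem_singleton_iff.mp h).symm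
    · exact comp_aF_dg_of_not_mem h
  · exfalso
    have : ((some 0 : XX), (none : XX)) ∈ dg Set.univ := hsub rfl
    exact Option.some_ne_none 0 this.1

/-- `dg univ` is the LUB of the singleton diagonal atoms. -/
lemma lub_atoms : IsLUBIn FF {g | ∃ n : ℕ, g = dg {some n}} (dg Set.univ) := by
  refine ⟨dg_mem univ_mem_DD, ?_, ?_⟩
  · rintro s ⟨n, rfl⟩
    exact dg_mono (Set.subset_univ _)
  · rintro c (⟨T, hT, rfl⟩ | rfl) hc
    · have hup : ∀ n : ℕ, (some n : XX) ∈ T := by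
        intro n
        exact (hc (dg {some n}) ⟨n, rfl⟩ (show ((some n : XX), (some n : XX)) ∈ dg {some n} from ⟨rfl, rfl⟩)).2
      have hTuniv : T = Set.univ := by
        rcases hT with hT | hT
        · exfalso
          have : (Set.range (Option.some : ℕ → XX)).Infinite :=
            Set.infinite_range_of_injective (Option.some_injective ℕ)
          apply this
          apply hT.1.subset
          rintro x ⟨n, rfl⟩
          exact hup n
        · ext x
          simp only [Set.mem_univ, iff_true]
          match x with
          | none => exact hT.2
          | some n => exact hup n
      rw [hTuniv]
    · exfalso
      have := hc (dg {some 0}) ⟨0, rfl⟩ (show ((some 0 : XX), (some 0 : XX)) ∈ dg {some 0} from ⟨rfl, rfl⟩)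
      rw [mem_aF] at this
      exact Option.some_ne_none 0 this.2

end Stmt11

namespace Stmt11
open PFAlg

lemma empty_mem_FF : (∅ : Set (XX × XX)) ∈ FF := by
  rw [← dg_empty]; exact dg_mem empty_mem_DD

lemma theta_empty' {Y : Type*} {θ : Set (XX × XX) → Set (Y × Y)} (h : IsRep FF θ) :
    θ ∅ = ∅ := by
  apply rep_theta_empty h empty_mem_FF
  rw [← dg_empty, adom_dg]
  exact dg_mem (DD_compl empty_mem_DD)

lemma aF_ne_empty : aF ≠ (∅ : Set (XX × XX)) := by
  intro hh
  have : ((some 0 : XX), (none : XX)) ∈ aF := rfl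
  rw [hh] at this; exact this

lemma exists_witness {Y : Type*} {θ : Set (XX × XX) → Set (Y × Y)} (h : IsRep FF θ) :
    ∃ x y z : Y, (x, y) ∈ θ aF ∧ (y, z) ∈ θ (dg Set.univ) ∧ (x, z) ∈ θ aF := by
  have hne : θ aF ≠ ∅ := by
    intro hh
    apply aF_ne_empty
    apply h.injOn aF_mem empty_mem_FF
    rw [hh, theta_empty' h]
  obtain ⟨⟨x, z⟩, hxz⟩ := Set.nonempty_iff_ne_empty.mpr hne
  have heq : aF = comp aF (dg Set.univ) := (comp_aF_dg_of_mem (Set.mem_univ none)).symm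
  have : θ aF = comp (θ aF) (θ (dg Set.univ)) := by
    conv_lhs => rw [heq]
    exact h.comp_eq aF aF_mem (dg Set.univ) (dg_mem univ_mem_DD)
  obtain ⟨y, hy1, hy2⟩ := this ▸ hxz
  exact ⟨x, y, z, hy1, hy2, hxz⟩

lemma kill {Y : Type*} {θ : Set (XX × XX) → Set (Y × Y)} (h : IsRep FF θ)
    {b : Set (XX × XX)} (hb : b ∈ FF) (hkill : comp aF b = ∅)
    {x y z : Y} (hxy : (x, y) ∈ θ aF) (hyz : (y, z) ∈ θ b) : False := by
  have : (x, z) ∈ comp (θ aF) (θ b) := ⟨y, hxy, hyz⟩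
  rw [← h.comp_eq aF aF_mem b hb, hkill, theta_empty' h] at this
  exact this

lemma not_join_complete {Y : Type*} {θ : Set (XX × XX) → Set (Y × Y)} (h : IsRep FF θ) :
    ¬ JoinComplete FF θ := by
  intro hJ
  obtain ⟨x, y, z, hxy, hyz, _⟩ := exists_witness h
  have hsub : {g | ∃ n : ℕ, g = dg {some n}} ⊆ FF := by
    rintro g ⟨n, rfl⟩; exact dg_mem (singleton_mem_DD n)
  have := hJ _ hsub _ lub_atoms
  rw [this] at hyz
  simp only [Set.mem_iUnion] at hyz
  obtain ⟨s, ⟨n, rfl⟩, hs⟩ := hyz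
  exact kill h (dg_mem (singleton_mem_DD n))
    (comp_aF_dg_of_not_mem (by simp)) hxy hs

lemma not_atomic_rep {Y : Type*} {θ : Set (XX × XX) → Set (Y × Y)} (h : IsRep FF θ) :
    ¬ AtomicRep FF θ := by
  intro hA
  obtain ⟨x, y, z, hxy, hyz, _⟩ := exists_witness h
  obtain ⟨b, hb, hyzb⟩ := hA (dg Set.univ) (dg_mem univ_mem_DD) (y, z) hyz
  have hbm : b ∩ dg Set.univ ≠ ∅ := by
    intro hh
    have : (y, z) ∈ θ (b ∩ dg Set.univ) := by
      rw [h.inter_eq b hb.1 (dg Set.univ) (dg_mem univ_mem_DD)]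
      exact ⟨hyzb, hyz⟩
    rw [hh, theta_empty' h] at this
    exact this
  have hbsub : b ⊆ dg Set.univ := by
    have heq := hb.2.2 (b ∩ dg Set.univ)
      (FF_alg.inter_mem b hb.1 (dg Set.univ) (dg_mem univ_mem_DD)) hbm
      Set.inter_subset_left
    rw [← heq]
    exact Set.inter_subset_right
  exact kill h hb.1 (atom_below_m_kills hb hbsub) hxy hyzb

end Stmt11

open PFAlg in
/-- there is an atomic algebra of partial functions `F` which admits no
complete representation by partial functions and no atomic representation by partial
functions (over any base `Y`). -/
theorem stmt11 :
    ∃ (X : Type) (F : Set (Set (X × X))), IsPFAlgebra F ∧ Atomic F ∧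
      (∀ (Y : Type v) (θ : Set (X × X) → Set (Y × Y)),
        IsRep F θ → ¬ (MeetComplete F θ ∧ JoinComplete F θ)) ∧
      (∀ (Y : Type v) (θ : Set (X × X) → Set (Y × Y)),
        IsRep F θ → ¬ AtomicRep F θ) := by
  refine ⟨Stmt11.XX, Stmt11.FF, Stmt11.FF_alg, Stmt11.FF_atomic, ?_, ?_⟩
  · intro Y θ hrep hc
    exact Stmt11.not_join_complete hrep hc.2
  · intro Y θ hrep
    exact Stmt11.not_atomic_rep hrep
end

section
/- Let F be an algebra of partial functions that admits a complete representation by partial functions. Then composition in F is completely left-distributive over joins: for every a ∈ F and every S ⊆ F whose supremum ⨆S exists in (F, ⊆), the supremum of {a∘s : s ∈ S} exists in (F, ⊆) and equals a∘(⨆S). -/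
open PFAlg in
/-- if an algebra of partial functions admits a complete representation by
partial functions, then composition is completely left-distributive over joins. -/
theorem stmt12 {X Y : Type*} (F : Set (Set (X × X))) (hF : IsPFAlgebra F)
    (θ : Set (X × X) → Set (Y × Y)) (hθ : IsRep F θ)
    (hmeet : MeetComplete F θ) (hjoin : JoinComplete F θ) :
    CompLeftDistribJoins F := by
  intro a ha S hS m hm
  obtain ⟨hmF, hub, hlub⟩ := hm
  refine ⟨hF.comp_mem a ha m hmF, ?_, ?_⟩
  · rintro t ⟨s, hs, rfl⟩
    rintro ⟨x, z⟩ ⟨y, hy1, hy2⟩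
    exact ⟨y, hy1, hub s hs hy2⟩
  · intro c hc hcub
    have hle : ∀ f ∈ F, ∀ g ∈ F, θ f ⊆ θ g → f ⊆ g := by
      intro f hf g hg h
      have h1 : θ (f ∩ g) = θ f := by
        rw [hθ.inter_eq f hf g hg]; exact Set.inter_eq_left.mpr h
      have := hθ.injOn (hF.inter_mem f hf g hg) hf h1
      rw [← this]; exact Set.inter_subset_right
    have hmono : ∀ f ∈ F, ∀ g ∈ F, f ⊆ g → θ f ⊆ θ g := by
      intro f hf g hg h
      rw [show θ f = θ (f ∩ g) by rw [Set.inter_eq_left.mpr h], hθ.inter_eq f hf g hg]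
      exact Set.inter_subset_right
    apply hle _ (hF.comp_mem a ha m hmF) c hc
    rw [hθ.comp_eq a ha m hmF, hjoin S hS m ⟨hmF, hub, hlub⟩]
    rintro ⟨x, z⟩ ⟨y, hy1, hy2⟩
    simp only [Set.mem_iUnion] at hy2
    obtain ⟨s, hs, hy2⟩ := hy2
    have hmem : (x, z) ∈ θ (comp a s) := by
      rw [hθ.comp_eq a ha s (hS hs)]; exact ⟨y, hy1, hy2⟩
    exact hmono _ (hF.comp_mem a ha s (hS hs)) c hc (hcub _ ⟨s, hs, rfl⟩) hmem
end

section
/- Let F be an algebra of partial functions that admits a complete representation by partial functions. Then composition in F is completely left-distributive over meets: for every a ∈ F and every nonempty S ⊆ F whose infimum ⨅S exists in (F, ⊆), the infimum of {a∘s : s ∈ S} exists in (F, ⊆) and equals a∘(⨅S). -/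
open PFAlg in
/-- if an algebra of partial functions admits a complete representation by
partial functions, then composition is completely left-distributive over meets. -/
theorem stmt13 {X Y : Type*} (F : Set (Set (X × X))) (hF : IsPFAlgebra F)
    (θ : Set (X × X) → Set (Y × Y)) (hθ : IsRep F θ)
    (hmeet : MeetComplete F θ) (hjoin : JoinComplete F θ) :
    CompLeftDistribMeets F := by
  intro a ha S hS hSne m hm
  obtain ⟨hmF, hmlb, hmglb⟩ := hm
  have hcm : comp a m ∈ F := hF.comp_mem a ha m hmF
  have hmono : ∀ s ∈ S, comp a m ⊆ comp a s := by
    intro s hs p hp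
    obtain ⟨y, hy1, hy2⟩ := hp
    exact ⟨y, hy1, hmlb s hs hy2⟩
  refine ⟨hcm, ?_, ?_⟩
  · rintro _ ⟨s, hs, rfl⟩
    exact hmono s hs
  · intro c hc hcle
    -- order reflection lemma for θ
    have hsub : ∀ u ∈ F, ∀ v ∈ F, u ⊆ v ↔ θ u ⊆ θ v := by
      intro u hu v hv
      constructor
      · intro huv
        have : u ∩ v = u := Set.inter_eq_left.mpr huv
        have h2 : θ u ∩ θ v = θ u := by rw [← hθ.inter_eq u hu v hv, this]
        exact Set.inter_eq_left.mp h2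
      · intro huv
        have h2 : θ (u ∩ v) = θ u := by rw [hθ.inter_eq u hu v hv]; exact Set.inter_eq_left.mpr huv
        have : u ∩ v = u := hθ.injOn (hF.inter_mem u hu v hv) hu h2
        exact Set.inter_eq_left.mp this
    have hθm : θ m = ⋂ s ∈ S, θ s := hmeet S hS hSne m ⟨hmF, hmlb, hmglb⟩
    -- θ c ⊆ θ (comp a m)
    have key : θ c ⊆ θ (comp a m) := by
      rw [hθ.comp_eq a ha m hmF, hθm]
      intro p hp
      obtain ⟨s0, hs0⟩ := hSne
      have hps0 : p ∈ θ (comp a s0) := by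
        have := (hsub c hc (comp a s0) (hF.comp_mem a ha s0 (hS hs0))).mp
          (hcle _ ⟨s0, hs0, rfl⟩)
        exact this hp
      rw [hθ.comp_eq a ha s0 (hS hs0)] at hps0
      obtain ⟨y, hy1, hy2⟩ := hps0
      refine ⟨y, hy1, ?_⟩
      simp only [Set.mem_iInter]
      intro s hs
      have hps : p ∈ θ (comp a s) := by
        have := (hsub c hc (comp a s) (hF.comp_mem a ha s (hS hs))).mp
          (hcle _ ⟨s, hs, rfl⟩)
        exact this hp
      rw [hθ.comp_eq a ha s (hS hs)] at hps
      obtain ⟨y', hy1', hy2'⟩ := hps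
      have : y' = y := hθ.pf a ha hy1' hy1
      rwa [this] at hy2'
    exact (hsub c hc (comp a m) hcm).mpr key
end

section
/- Let F be an algebra of partial functions, let x be an atom of F, and let a ∈ F be such that x∘a ≠ ∅. Then x∘a is an atom of F. -/
open PFAlg in
/-- if `x` is an atom of an algebra of partial functions `F`, `a ∈ F` and
`x∘a ≠ ∅`, then `x∘a` is an atom of `F`. -/
theorem stmt14 {X : Type*} (F : Set (Set (X × X))) (hF : IsPFAlgebra F)
    (x a : Set (X × X)) (hx : IsAtomOf F x) (ha : a ∈ F) (hne : comp x a ≠ ∅) :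
    IsAtomOf F (comp x a) := by
  obtain ⟨hxF, hxne, hxmin⟩ := hx
  refine ⟨hF.comp_mem x hxF a ha, hne, ?_⟩
  intro g hgF hgne hg
  set x' : Set (X × X) := comp (adom (adom g)) x with hx'def
  have hx'F : x' ∈ F := hF.comp_mem _ (hF.adom_mem _ (hF.adom_mem _ hgF)) _ hxF
  have hx'sub : x' ⊆ x := by
    rintro ⟨p, q⟩ ⟨y, ⟨hy1, _⟩, hyx⟩
    simp only at hy1
    subst hy1; exact hyx
  have hdom : ∀ p : X, (∃ z, (p, z) ∈ g) → (p, p) ∈ adom (adom g) := by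
    rintro p ⟨z, hz⟩
    refine ⟨rfl, fun y hy => ?_⟩
    exact hy.2 z hz
  have hx'ne : x' ≠ ∅ := by
    obtain ⟨⟨p, r⟩, hpr⟩ := Set.nonempty_iff_ne_empty.mpr hgne
    obtain ⟨q, hq, _⟩ := hg hpr
    intro h
    have : (p, q) ∈ x' := ⟨p, hdom p ⟨r, hpr⟩, hq⟩
    simp [h] at this
  have hx'eq : x' = x := hxmin x' hx'F hx'ne hx'sub
  apply subset_antisymm hg
  rintro ⟨p, r⟩ ⟨q, hpq, hqr⟩
  have hpq' : (p, q) ∈ x' := hx'eq ▸ hpq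
  obtain ⟨y, ⟨hy1, hy2⟩, _⟩ := hpq'
  simp only at hy1 hy2
  subst hy1
  have hex : ∃ s, (p, s) ∈ g := by
    by_contra hno
    push_neg at hno
    exact hy2 p ⟨rfl, hno⟩
  obtain ⟨s, hs⟩ := hex
  obtain ⟨q', hq'x, hq's⟩ := hg hs
  have : q' = q := hF.pf x hxF hq'x hpq
  subst this
  have : s = r := hF.pf a ha hq's hqr
  subst this
  exact hs
end

section
/- Let F be an algebra of partial functions that is atomic and in which composition is completely left-distributive over joins. Let At(F) denote the set of atoms of F, and for each a ∈ F define the partial function θ(a) on At(F) by θ(a)(x) = x∘a if x∘a ≠ ∅, and θ(a)(x) undefined otherwise. Then θ is a complete representation of F by partial functions with base At(F): θ is injective, θ(a∘b) = θ(a)∘θ(b), θ(a ⊓ b) = θ(a) ∩ θ(b), θ(A(a)) = A(θ(a)) for all a, b ∈ F, and whenever the supremum ⨆S of a subset S ⊆ F exists in (F, ⊆), θ(⨆S) = ⋃{θ(s) : s ∈ S}. -/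
namespace PFAlgAux

open PFAlg

variable {X : Type*} {F : Set (Set (X × X))}

lemma mem_comp {W : Type*} {f g : Set (W × W)} {p q : W} :
    (p, q) ∈ comp f g ↔ ∃ y, (p, y) ∈ f ∧ (y, q) ∈ g := Iff.rfl

lemma mem_adom {W : Type*} {f : Set (W × W)} {p q : W} :
    (p, q) ∈ adom f ↔ p = q ∧ ∀ y, (p, y) ∉ f := Iff.rfl

lemma comp_assoc {W : Type*} (f g h : Set (W × W)) :
    comp (comp f g) h = comp f (comp g h) := by
  ext ⟨p, q⟩
  constructor
  · rintro ⟨y, ⟨w, hw1, hw2⟩, hy⟩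
    exact ⟨w, hw1, y, hw2, hy⟩
  · rintro ⟨w, hw, y, h1, h2⟩
    exact ⟨y, ⟨w, hw, h1⟩, h2⟩

lemma comp_mono_right {W : Type*} {f g h : Set (W × W)} (hgh : g ⊆ h) :
    comp f g ⊆ comp f h := by
  rintro ⟨p, q⟩ ⟨y, h1, h2⟩
  exact ⟨y, h1, hgh h2⟩

lemma comp_empty_left {W : Type*} (g : Set (W × W)) : comp (∅ : Set (W × W)) g = ∅ := by
  ext ⟨p, q⟩
  simp [mem_comp]

lemma pf_comp {W : Type*} {f g : Set (W × W)} (hf : IsPF f) (hg : IsPF g) :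
    IsPF (comp f g) := by
  rintro x y z ⟨w, hw1, hw2⟩ ⟨w', hw1', hw2'⟩
  obtain rfl := hf hw1 hw1'
  exact hg hw2 hw2'

lemma empty_mem (hF : IsPFAlgebra F) : (∅ : Set (X × X)) ∈ F := by
  obtain ⟨f, hf⟩ := hF.nonempty
  have h : f ∩ adom f = ∅ := by
    ext ⟨p, q⟩
    simp only [Set.mem_inter_iff, Set.mem_empty_iff_false, iff_false, not_and]
    intro hpq hq
    exact (mem_adom.mp hq).2 q hpq
  rw [← h]
  exact hF.inter_mem f hf _ (hF.adom_mem f hf)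

lemma mem_dom {W : Type*} {f : Set (W × W)} {p q : W} :
    (p, q) ∈ adom (adom f) ↔ p = q ∧ ∃ y, (p, y) ∈ f := by
  rw [mem_adom]
  constructor
  · rintro ⟨rfl, h⟩
    refine ⟨rfl, ?_⟩
    by_contra hn
    push_neg at hn
    exact h p ⟨rfl, hn⟩
  · rintro ⟨rfl, y, hy⟩
    exact ⟨rfl, fun w hw => (mem_adom.mp hw).2 y hy⟩

/-- If `x` is an atom and `x ∘ a ≠ ∅`, then `x ∘ a` is an atom. -/
lemma atom_comp (hF : IsPFAlgebra F) {x a : Set (X × X)} (hx : IsAtomOf F x)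
    (ha : a ∈ F) (hne : comp x a ≠ ∅) : IsAtomOf F (comp x a) := by
  refine ⟨hF.comp_mem x hx.1 a ha, hne, ?_⟩
  intro g hg hgne hgsub
  have hd : adom (adom g) ∈ F := hF.adom_mem _ (hF.adom_mem _ hg)
  have hhF : comp (adom (adom g)) x ∈ F := hF.comp_mem _ hd x hx.1
  have hhsub : comp (adom (adom g)) x ⊆ x := by
    rintro ⟨p, q⟩ ⟨y, hy1, hy2⟩
    obtain ⟨rfl, -⟩ := mem_dom.mp hy1
    exact hy2
  have hhne : comp (adom (adom g)) x ≠ ∅ := by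
    obtain ⟨⟨p, q⟩, hpq⟩ := Set.nonempty_iff_ne_empty.mpr hgne
    obtain ⟨r, hr, -⟩ := hgsub hpq
    exact Set.nonempty_iff_ne_empty.mp ⟨(p, r), ⟨p, mem_dom.mpr ⟨rfl, q, hpq⟩, hr⟩⟩
  have hhx : comp (adom (adom g)) x = x := hx.2.2 _ hhF hhne hhsub
  have hpf : IsPF (comp x a) := pf_comp (hF.pf x hx.1) (hF.pf a ha)
  refine Set.Subset.antisymm hgsub ?_
  rintro ⟨p, q⟩ ⟨r, hr, hra⟩
  have hrh : (p, r) ∈ comp (adom (adom g)) x := hhx.symm ▸ hr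
  obtain ⟨y, hy1, -⟩ := hrh
  obtain ⟨-, q', hq'⟩ := mem_dom.mp hy1
  have hq'c : (p, q') ∈ comp x a := hgsub hq'
  obtain rfl := hpf hq'c ⟨r, hr, hra⟩
  exact hq'

/-- The domain element of an atom is an atom. -/
lemma atom_dom (hF : IsPFAlgebra F) {x : Set (X × X)} (hx : IsAtomOf F x) :
    IsAtomOf F (adom (adom x)) := by
  have hdF : adom (adom x) ∈ F := hF.adom_mem _ (hF.adom_mem _ hx.1)
  refine ⟨hdF, ?_, ?_⟩
  · obtain ⟨⟨p, q⟩, hpq⟩ := Set.nonempty_iff_ne_empty.mpr hx.2.1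
    exact Set.nonempty_iff_ne_empty.mp ⟨(p, p), mem_dom.mpr ⟨rfl, q, hpq⟩⟩
  · intro g hg hgne hgsub
    have hgx : comp g x = x := by
      apply hx.2.2 _ (hF.comp_mem g hg x hx.1)
      · obtain ⟨⟨p, q⟩, hpq⟩ := Set.nonempty_iff_ne_empty.mpr hgne
        obtain ⟨rfl, y, hy⟩ := mem_dom.mp (hgsub hpq)
        exact Set.nonempty_iff_ne_empty.mp ⟨(p, y), ⟨p, hpq, hy⟩⟩
      · rintro ⟨p, q⟩ ⟨y, hy1, hy2⟩
        obtain ⟨rfl, -⟩ := mem_dom.mp (hgsub hy1)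
        exact hy2
    refine Set.Subset.antisymm hgsub ?_
    rintro ⟨p, q⟩ hpq
    obtain ⟨rfl, y, hy⟩ := mem_dom.mp hpq
    rw [← hgx] at hy
    obtain ⟨w, hw1, -⟩ := hy
    obtain ⟨rfl, -⟩ := mem_dom.mp (hgsub hw1)
    exact hw1

/-- Every member of `F` is the least upper bound of the atoms below it. -/
lemma lub_atoms (hF : IsPFAlgebra F) (hatomic : Atomic F) {f : Set (X × X)} (hf : f ∈ F) :
    IsLUBIn F {b | IsAtomOf F b ∧ b ⊆ f} f := by
  refine ⟨hf, fun s hs => hs.2, ?_⟩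
  intro u hu hub
  have huf : u ∩ f ∈ F := hF.inter_mem u hu f hf
  have hgF : comp (adom (u ∩ f)) f ∈ F := hF.comp_mem _ (hF.adom_mem _ huf) f hf
  have hgsubf : comp (adom (u ∩ f)) f ⊆ f := by
    rintro ⟨p, q⟩ ⟨y, hy1, hy2⟩
    obtain ⟨rfl, -⟩ := mem_adom.mp hy1
    exact hy2
  have hgempty : comp (adom (u ∩ f)) f = ∅ := by
    by_contra hne
    obtain ⟨b, hb, hbg⟩ := hatomic _ hgF hne
    have hbu : b ⊆ u := hub b ⟨hb, hbg.trans hgsubf⟩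
    obtain ⟨⟨p, q⟩, hpq⟩ := Set.nonempty_iff_ne_empty.mpr hb.2.1
    obtain ⟨y, hy1, hy2⟩ := hbg hpq
    exact (mem_adom.mp hy1).2 q ⟨hbu hpq, hgsubf (hbg hpq)⟩
  rintro ⟨p, q⟩ hpq
  have hpd : ∃ y, (p, y) ∈ u ∩ f := by
    by_contra hn
    push_neg at hn
    have hmem : (p, q) ∈ comp (adom (u ∩ f)) f := ⟨p, mem_adom.mpr ⟨rfl, hn⟩, hpq⟩
    rw [hgempty] at hmem
    exact hmem
  obtain ⟨y, hyu, hyf⟩ := hpd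
  obtain rfl := hF.pf f hf hyf hpq
  exact hyu

/-- Two atoms sharing a point are equal. -/
lemma atom_eq_atom (hF : IsPFAlgebra F) {b b' : Set (X × X)} (hb : IsAtomOf F b)
    (hb' : IsAtomOf F b') {p : X × X} (h1 : p ∈ b) (h2 : p ∈ b') : b = b' := by
  have hm : b ∩ b' ∈ F := hF.inter_mem b hb.1 b' hb'.1
  have hne : b ∩ b' ≠ ∅ := Set.nonempty_iff_ne_empty.mp ⟨p, h1, h2⟩
  rw [← hb.2.2 _ hm hne Set.inter_subset_left]
  exact hb'.2.2 _ hm hne Set.inter_subset_right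

end PFAlgAux

open PFAlg in
/-- if `F` is an atomic algebra of partial functions in which composition is
completely left-distributive over joins, then the map `θ` sending `a ∈ F` to the partial
function on `At(F)` given by `θ(a)(x) = x∘a` whenever `x∘a ≠ ∅` (undefined otherwise) is a
complete representation of `F` by partial functions with base `At(F)`. -/
theorem stmt15 {X : Type*} (F : Set (Set (X × X))) (hF : IsPFAlgebra F)
    (hatomic : Atomic F) (hdist : CompLeftDistribJoins F)
    (θ : Set (X × X) → Set ({x : Set (X × X) // IsAtomOf F x} × {x : Set (X × X) // IsAtomOf F x}))
    (hθ : ∀ a, θ a = {p : {x : Set (X × X) // IsAtomOf F x} × {x : Set (X × X) // IsAtomOf F x} |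
      comp (p.1 : Set (X × X)) a ≠ ∅ ∧ (p.2 : Set (X × X)) = comp (p.1 : Set (X × X)) a}) :
    IsRep F θ ∧ MeetComplete F θ ∧ JoinComplete F θ := by
  classical
  have hmemθ : ∀ a, ∀ p : {x : Set (X × X) // IsAtomOf F x} × {x : Set (X × X) // IsAtomOf F x},
      p ∈ θ a ↔ comp (p.1 : Set (X × X)) a ≠ ∅ ∧
        (p.2 : Set (X × X)) = comp (p.1 : Set (X × X)) a := by
    intro a p
    rw [hθ]
    exact Iff.rfl
  -- monotonicity of θ
  have hmono : ∀ a ∈ F, ∀ b ∈ F, a ⊆ b → θ a ⊆ θ b := by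
    intro a ha b hb hab p hp
    obtain ⟨hne, heq⟩ := (hmemθ a p).mp hp
    have hsub : comp (p.1 : Set (X × X)) a ⊆ comp (p.1 : Set (X × X)) b :=
      PFAlgAux.comp_mono_right hab
    have hbne : comp (p.1 : Set (X × X)) b ≠ ∅ := by
      intro h
      rw [h] at hsub
      exact hne (Set.subset_empty_iff.mp hsub)
    have hatom := PFAlgAux.atom_comp hF p.1.2 hb hbne
    have heq2 : comp (p.1 : Set (X × X)) a = comp (p.1 : Set (X × X)) b :=
      hatom.2.2 _ (hF.comp_mem _ p.1.2.1 a ha) hne hsub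
    exact (hmemθ b p).mpr ⟨hbne, heq.trans heq2⟩
  -- injectivity
  have hkey : ∀ a ∈ F, ∀ b ∈ F, θ a = θ b → a ⊆ b := by
    intro a ha b hb hab
    by_contra hsub
    obtain ⟨⟨p, q⟩, hpa, hpb⟩ := Set.not_subset.mp hsub
    have habF : a ∩ b ∈ F := hF.inter_mem a ha b hb
    have hgF : comp (adom (a ∩ b)) a ∈ F := hF.comp_mem _ (hF.adom_mem _ habF) a ha
    have hgsub : comp (adom (a ∩ b)) a ⊆ a := by
      rintro ⟨p', q'⟩ ⟨y, hy1, hy2⟩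
      obtain ⟨rfl, -⟩ := PFAlgAux.mem_adom.mp hy1
      exact hy2
    have hpg : (p, q) ∈ comp (adom (a ∩ b)) a := by
      refine ⟨p, PFAlgAux.mem_adom.mpr ⟨rfl, fun y hy => ?_⟩, hpa⟩
      obtain rfl := hF.pf a ha hy.1 hpa
      exact hpb hy.2
    obtain ⟨x', hx', hx'g⟩ := hatomic _ hgF (Set.nonempty_iff_ne_empty.mp ⟨_, hpg⟩)
    have hx'a : x' ⊆ a := hx'g.trans hgsub
    have he : IsAtomOf F (adom (adom x')) := PFAlgAux.atom_dom hF hx'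
    have hea : x' ⊆ comp (adom (adom x')) a := by
      rintro ⟨p', q'⟩ hp'
      exact ⟨p', PFAlgAux.mem_dom.mpr ⟨rfl, q', hp'⟩, hx'a hp'⟩
    obtain ⟨⟨p', q'⟩, hp'⟩ := Set.nonempty_iff_ne_empty.mpr hx'.2.1
    have heane : comp (adom (adom x')) a ≠ ∅ :=
      Set.nonempty_iff_ne_empty.mp ⟨_, hea hp'⟩
    have hmem : ((⟨_, he⟩, ⟨_, PFAlgAux.atom_comp hF he ha heane⟩) :
        {x : Set (X × X) // IsAtomOf F x} × {x : Set (X × X) // IsAtomOf F x}) ∈ θ a :=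
      (hmemθ a _).mpr ⟨heane, rfl⟩
    rw [hab] at hmem
    obtain ⟨-, heq2⟩ := (hmemθ b _).mp hmem
    have h1 : (p', q') ∈ comp (adom (adom x')) b := by
      rw [← heq2]
      exact hea hp'
    obtain ⟨y, hy1, hy2⟩ := h1
    obtain ⟨rfl, -⟩ := PFAlgAux.mem_dom.mp hy1
    obtain ⟨w, hw1, -⟩ := hx'g hp'
    exact (PFAlgAux.mem_adom.mp hw1).2 q' ⟨hx'a hp', hy2⟩
  have hinj : Set.InjOn θ F := fun a ha b hb hab =>
    Set.Subset.antisymm (hkey a ha b hb hab) (hkey b hb a ha hab.symm)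
  have hpf : ∀ f ∈ F, IsPF (θ f) := by
    intro f hf x y z hy hz
    exact Subtype.ext (((hmemθ f (x, y)).mp hy).2.trans ((hmemθ f (x, z)).mp hz).2.symm)
  -- composition
  have hcomp_eq : ∀ a ∈ F, ∀ b ∈ F, θ (comp a b) = comp (θ a) (θ b) := by
    intro a ha b hb
    ext ⟨x, z⟩
    have hassoc : comp (x : Set (X × X)) (comp a b) = comp (comp (x : Set (X × X)) a) b :=
      (PFAlgAux.comp_assoc _ _ _).symm
    rw [hmemθ, PFAlgAux.mem_comp]
    constructor
    · rintro ⟨hne, heq⟩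
      have hxa : comp (x : Set (X × X)) a ≠ ∅ := by
        intro h
        apply hne
        rw [hassoc, h, PFAlgAux.comp_empty_left]
      refine ⟨⟨_, PFAlgAux.atom_comp hF x.2 ha hxa⟩, (hmemθ a _).mpr ⟨hxa, rfl⟩,
        (hmemθ b _).mpr ⟨?_, ?_⟩⟩
      · rw [← hassoc]
        exact hne
      · exact heq.trans hassoc
    · rintro ⟨y, hy1, hy2⟩
      obtain ⟨hya, hyeq⟩ := (hmemθ a _).mp hy1
      obtain ⟨hyb, hzeq⟩ := (hmemθ b _).mp hy2
      constructor
      · rw [hassoc, ← hyeq]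
        exact hyb
      · rw [hassoc, ← hyeq]
        exact hzeq
  -- intersection
  have hinter_eq : ∀ a ∈ F, ∀ b ∈ F, θ (a ∩ b) = θ a ∩ θ b := by
    intro a ha b hb
    ext ⟨x, z⟩
    rw [Set.mem_inter_iff, hmemθ, hmemθ, hmemθ]
    constructor
    · rintro ⟨hne, heq⟩
      have hxa : comp (x : Set (X × X)) a ≠ ∅ := by
        intro h
        have hs := PFAlgAux.comp_mono_right (f := (x : Set (X × X)))
          (Set.inter_subset_left : a ∩ b ⊆ a)
        rw [h] at hs
        exact hne (Set.subset_empty_iff.mp hs)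
      have hxb : comp (x : Set (X × X)) b ≠ ∅ := by
        intro h
        have hs := PFAlgAux.comp_mono_right (f := (x : Set (X × X)))
          (Set.inter_subset_right : a ∩ b ⊆ b)
        rw [h] at hs
        exact hne (Set.subset_empty_iff.mp hs)
      have hmF : a ∩ b ∈ F := hF.inter_mem a ha b hb
      have h1 : comp (x : Set (X × X)) (a ∩ b) = comp (x : Set (X × X)) a :=
        (PFAlgAux.atom_comp hF x.2 ha hxa).2.2 _ (hF.comp_mem _ x.2.1 _ hmF) hne
          (PFAlgAux.comp_mono_right Set.inter_subset_left)
      have h2 : comp (x : Set (X × X)) (a ∩ b) = comp (x : Set (X × X)) b :=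
        (PFAlgAux.atom_comp hF x.2 hb hxb).2.2 _ (hF.comp_mem _ x.2.1 _ hmF) hne
          (PFAlgAux.comp_mono_right Set.inter_subset_right)
      exact ⟨⟨hxa, heq.trans h1⟩, hxb, heq.trans h2⟩
    · rintro ⟨⟨hna, hea⟩, hnb, heb⟩
      have hab2 : comp (x : Set (X × X)) a = comp (x : Set (X × X)) b := hea.symm.trans heb
      have hxe : comp (x : Set (X × X)) (a ∩ b) = comp (x : Set (X × X)) a := by
        refine Set.Subset.antisymm (PFAlgAux.comp_mono_right Set.inter_subset_left) ?_
        rintro ⟨p, q⟩ ⟨r, hr, hra⟩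
        have hcb : (p, q) ∈ comp (x : Set (X × X)) b := by
          rw [← hab2]
          exact ⟨r, hr, hra⟩
        obtain ⟨r', hr', hrb⟩ := hcb
        obtain rfl := hF.pf _ x.2.1 hr hr'
        exact ⟨r, hr, hra, hrb⟩
      constructor
      · rw [hxe]
        exact hna
      · rw [hxe]
        exact hea
  -- antidomain
  have hadom_eq : ∀ a ∈ F, θ (adom a) = adom (θ a) := by
    intro a ha
    ext ⟨x, z⟩
    have hsubx : comp (x : Set (X × X)) (adom a) ⊆ (x : Set (X × X)) := by
      rintro ⟨p, q⟩ ⟨y, hy1, hy2⟩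
      obtain ⟨rfl, -⟩ := PFAlgAux.mem_adom.mp hy2
      exact hy1
    have hclaim1 : comp (x : Set (X × X)) a = ∅ →
        comp (x : Set (X × X)) (adom a) = (x : Set (X × X)) := by
      intro h
      refine Set.Subset.antisymm hsubx ?_
      rintro ⟨p, q⟩ hpq
      refine ⟨q, hpq, PFAlgAux.mem_adom.mpr ⟨rfl, fun w hw => ?_⟩⟩
      have hmem : (p, w) ∈ comp (x : Set (X × X)) a := ⟨q, hpq, hw⟩
      rw [h] at hmem
      exact hmem
    have hclaim2 : comp (x : Set (X × X)) (adom a) ≠ ∅ →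
        comp (x : Set (X × X)) a = ∅ := by
      intro hne
      have hxF : comp (x : Set (X × X)) (adom a) ∈ F :=
        hF.comp_mem _ x.2.1 _ (hF.adom_mem a ha)
      have heqx : comp (x : Set (X × X)) (adom a) = (x : Set (X × X)) :=
        x.2.2.2 _ hxF hne hsubx
      ext ⟨p, q⟩
      simp only [Set.mem_empty_iff_false, iff_false]
      rintro ⟨r, hr, hra⟩
      have hrx : (p, r) ∈ comp (x : Set (X × X)) (adom a) := by
        rw [heqx]
        exact hr
      obtain ⟨y, hy1, hy2⟩ := hrx
      obtain ⟨rfl, hall⟩ := PFAlgAux.mem_adom.mp hy2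
      exact hall q hra
    rw [hmemθ, PFAlgAux.mem_adom]
    constructor
    · rintro ⟨hne, heq⟩
      have hxa := hclaim2 hne
      refine ⟨Subtype.ext ?_, fun y hy => absurd hxa ((hmemθ a (x, y)).mp hy).1⟩
      rw [heq, hclaim1 hxa]
    · rintro ⟨hxz, hall⟩
      have hxa : comp (x : Set (X × X)) a = ∅ := by
        by_contra hne
        exact hall ⟨_, PFAlgAux.atom_comp hF x.2 ha hne⟩ ((hmemθ a _).mpr ⟨hne, rfl⟩)
      constructor
      · rw [hclaim1 hxa]
        exact x.2.2.1
      · rw [hclaim1 hxa, hxz]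
  -- meet completeness
  have hmeet : MeetComplete F θ := by
    intro S hS hSne m hm
    apply Set.Subset.antisymm
    · intro p hp
      simp only [Set.mem_iInter]
      intro s hs
      exact hmono m hm.1 s (hS hs) (hm.2.1 s hs) hp
    · rintro ⟨x, z⟩ hp
      simp only [Set.mem_iInter] at hp
      have hps : ∀ s ∈ S, comp (x : Set (X × X)) s ≠ ∅ ∧
          (z : Set (X × X)) = comp (x : Set (X × X)) s :=
        fun s hs => (hmemθ s (x, z)).mp (hp s hs)
      obtain ⟨s₀, hs₀⟩ := hSne
      obtain ⟨⟨p₀, q⟩, hpq⟩ := Set.nonempty_iff_ne_empty.mpr z.2.2.1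
      have hpq0 : (p₀, q) ∈ comp (x : Set (X × X)) s₀ := by
        rw [← (hps s₀ hs₀).2]
        exact hpq
      obtain ⟨r, hr, hrs₀⟩ := hpq0
      have hbs : ∀ s ∈ S, ∃ b, IsAtomOf F b ∧ b ⊆ s ∧ (r, q) ∈ b := by
        intro s hs
        have hsF : s ∈ F := hS hs
        have hlub := hdist _ x.2.1 {b | IsAtomOf F b ∧ b ⊆ s} (fun b hb => hb.1.1) s
          (PFAlgAux.lub_atoms hF hatomic hsF)
        have hex : ∃ b, (IsAtomOf F b ∧ b ⊆ s) ∧ comp (x : Set (X × X)) b ≠ ∅ := by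
          by_contra hn
          push_neg at hn
          have hub : comp (x : Set (X × X)) s ⊆ ∅ := by
            apply hlub.2.2 ∅ (PFAlgAux.empty_mem hF)
            rintro t ⟨b, hb, rfl⟩
            show comp (x : Set (X × X)) b ⊆ ∅
            rw [hn b hb]
          exact (hps s hs).1 (Set.subset_empty_iff.mp hub)
        obtain ⟨b, hb, hbne⟩ := hex
        have hbz : comp (x : Set (X × X)) b = (z : Set (X × X)) := by
          apply z.2.2.2 _ (hF.comp_mem _ x.2.1 b hb.1.1) hbne
          have h1 : comp (x : Set (X × X)) b ⊆ comp (x : Set (X × X)) s :=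
            PFAlgAux.comp_mono_right hb.2
          rw [← (hps s hs).2] at h1
          exact h1
        refine ⟨b, hb.1, hb.2, ?_⟩
        have hpqb : (p₀, q) ∈ comp (x : Set (X × X)) b := by
          rw [hbz]
          exact hpq
        obtain ⟨r', hr', hrb⟩ := hpqb
        obtain rfl := hF.pf _ x.2.1 hr hr'
        exact hrb
      obtain ⟨b₀, hb₀, hb₀s₀, hb₀rq⟩ := hbs s₀ hs₀
      have hb₀m : b₀ ⊆ m := by
        apply hm.2.2 b₀ hb₀.1
        intro s hs
        obtain ⟨b, hb, hbsub, hbrq⟩ := hbs s hs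
        rw [PFAlgAux.atom_eq_atom hF hb₀ hb hb₀rq hbrq]
        exact hbsub
      have hne : comp (x : Set (X × X)) m ≠ ∅ :=
        Set.nonempty_iff_ne_empty.mp ⟨(p₀, q), r, hr, hb₀m hb₀rq⟩
      have heqz : comp (x : Set (X × X)) m = (z : Set (X × X)) := by
        apply z.2.2.2 _ (hF.comp_mem _ x.2.1 m hm.1) hne
        have h1 : comp (x : Set (X × X)) m ⊆ comp (x : Set (X × X)) s₀ :=
          PFAlgAux.comp_mono_right (hm.2.1 s₀ hs₀)
        rw [← (hps s₀ hs₀).2] at h1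
        exact h1
      exact (hmemθ m (x, z)).mpr ⟨hne, heqz.symm⟩
  -- join completeness
  have hjoin : JoinComplete F θ := by
    intro S hS m hm
    apply Set.Subset.antisymm
    · rintro ⟨x, z⟩ hp
      obtain ⟨hne, heq⟩ := (hmemθ m (x, z)).mp hp
      have hlub := hdist _ x.2.1 S hS m hm
      by_contra hnot
      simp only [Set.mem_iUnion, not_exists] at hnot
      have hall : ∀ s ∈ S, comp (x : Set (X × X)) s = ∅ := by
        intro s hs
        by_contra hne'
        have hsub : comp (x : Set (X × X)) s ⊆ (z : Set (X × X)) := by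
          rw [heq]
          exact PFAlgAux.comp_mono_right (hm.2.1 s hs)
        have heqz : comp (x : Set (X × X)) s = (z : Set (X × X)) :=
          z.2.2.2 _ (hF.comp_mem _ x.2.1 s (hS hs)) hne' hsub
        exact hnot s hs ((hmemθ s (x, z)).mpr ⟨hne', heqz.symm⟩)
      have hub : comp (x : Set (X × X)) m ⊆ ∅ := by
        apply hlub.2.2 ∅ (PFAlgAux.empty_mem hF)
        rintro t ⟨s, hs, rfl⟩
        show comp (x : Set (X × X)) s ⊆ ∅
        rw [hall s hs]
      exact hne (Set.subset_empty_iff.mp hub)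
    · intro p hp
      simp only [Set.mem_iUnion] at hp
      obtain ⟨s, hs, hps⟩ := hp
      exact hmono s (hS hs) m hm.1 (hm.2.1 s hs) hps
  exact ⟨⟨hinj, hpf, hcomp_eq, hinter_eq, hadom_eq⟩, hmeet, hjoin⟩
end

section
/- Let F be an algebra of partial functions that is atomic. Then F is atomistic: every f ∈ F is the supremum in (F, ⊆) of the set {x : x is an atom of F and x ⊆ f}. -/
open PFAlg in
/-- an atomic algebra of partial functions is atomistic: every `f ∈ F` is the
supremum in `(F, ⊆)` of the atoms of `F` below it. -/
theorem stmt16 {X : Type*} (F : Set (Set (X × X))) (hF : IsPFAlgebra F)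
    (hatomic : Atomic F) :
    ∀ f ∈ F, IsLUBIn F {x | IsAtomOf F x ∧ x ⊆ f} f := by
  intro f hf
  refine ⟨hf, fun s hs => hs.2, ?_⟩
  intro c hc hub
  intro p hp
  by_contra hpc
  obtain ⟨x, y⟩ := p
  have hfc : f ∩ c ∈ F := hF.inter_mem f hf c hc
  have hxad : (x, x) ∈ adom (f ∩ c) := by
    refine ⟨rfl, fun z hz => ?_⟩
    have : z = y := hF.pf f hf hz.1 hp
    exact hpc (this ▸ hz.2)
  set h : Set (X × X) := comp (adom (f ∩ c)) f with hh
  have hhF : h ∈ F := hF.comp_mem _ (hF.adom_mem _ hfc) f hf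
  have hph : (x, y) ∈ h := ⟨x, hxad, hp⟩
  have hne : h ≠ ∅ := fun e => by simp [e] at hph
  obtain ⟨b, hb, hbh⟩ := hatomic h hhF hne
  have hhf : h ⊆ f := by
    rintro ⟨u, v⟩ ⟨w, hw1, hw2⟩
    have huw : u = w := hw1.1
    rwa [← huw] at hw2
  have hbc : b ⊆ c := hub b ⟨hb, hbh.trans hhf⟩
  obtain ⟨q, hq⟩ := Set.nonempty_iff_ne_empty.2 hb.2.1
  obtain ⟨u, v⟩ := q
  obtain ⟨w, hw1, hw2⟩ := hbh hq
  have huw : u = w := hw1.1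
  have huv : (u, v) ∈ f := by rwa [← huw] at hw2
  exact hw1.2 v ⟨huv, hbc hq⟩
end

section
/- Let F be an algebra of partial functions that is atomic. Then composition in F is completely left-distributive over joins if and only if for all a, b, c ∈ F: if c ⊇ a∘x for every atom x of F with x ⊆ b, then c ⊇ a∘b. -/
open PFAlg

private lemma restrict_mem {X : Type*} (g b : Set (X × X)) (p q : X) :
    (p, q) ∈ comp (adom g) b ↔ (∀ y, (p, y) ∉ g) ∧ (p, q) ∈ b := by
  constructor
  · rintro ⟨y, ⟨hy, hng⟩, hb⟩
    cases hy
    exact ⟨hng, hb⟩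
  · rintro ⟨hng, hb⟩
    exact ⟨p, ⟨rfl, hng⟩, hb⟩

private lemma lub_atoms {X : Type*} {F : Set (Set (X × X))} (hF : IsPFAlgebra F)
    (hatomic : Atomic F) {b : Set (X × X)} (hb : b ∈ F) :
    IsLUBIn F {x | IsAtomOf F x ∧ x ⊆ b} b := by
  refine ⟨hb, fun s hs => hs.2, fun c hc hub => ?_⟩
  rintro ⟨p, q⟩ hp
  by_contra hpc
  have hgF : b ∩ c ∈ F := hF.inter_mem b hb c hc
  have hkF : comp (adom (b ∩ c)) b ∈ F := hF.comp_mem _ (hF.adom_mem _ hgF) b hb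
  have hpk : (p, q) ∈ comp (adom (b ∩ c)) b := by
    rw [restrict_mem]
    refine ⟨fun y hy => ?_, hp⟩
    have : y = q := hF.pf b hb hy.1 hp
    exact hpc (this ▸ hy.2)
  have hkne : comp (adom (b ∩ c)) b ≠ ∅ := fun h => by simp [h] at hpk
  obtain ⟨x, hx, hxk⟩ := hatomic _ hkF hkne
  have hxb : x ⊆ b := fun r hr => ((restrict_mem _ _ _ _).1 (hxk hr)).2
  have hxc : x ⊆ c := hub x ⟨hx, hxb⟩
  obtain ⟨⟨r, s⟩, hrs⟩ := Set.nonempty_iff_ne_empty.2 hx.2.1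
  exact ((restrict_mem _ _ _ _).1 (hxk hrs)).1 s ⟨hxb hrs, hxc hrs⟩

/-- in an atomic algebra of partial functions, composition is completely
left-distributive over joins iff for all `a, b, c ∈ F`: if `c ⊇ a∘x` for every atom
`x ⊆ b`, then `c ⊇ a∘b`. -/
theorem stmt17 {X : Type*} (F : Set (Set (X × X))) (hF : IsPFAlgebra F)
    (hatomic : Atomic F) :
    CompLeftDistribJoins F ↔
      ∀ a ∈ F, ∀ b ∈ F, ∀ c ∈ F,
        (∀ x, IsAtomOf F x → x ⊆ b → comp a x ⊆ c) → comp a b ⊆ c := by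
  constructor
  · intro hdist a ha b hb c hc hatoms
    have hlub := hdist a ha {x | IsAtomOf F x ∧ x ⊆ b}
      (fun x hx => hx.1.1) b (lub_atoms hF hatomic hb)
    refine hlub.2.2 c hc ?_
    rintro t ⟨x, ⟨hx, hxb⟩, rfl⟩
    exact hatoms x hx hxb
  · intro H a ha S hS m hm
    refine ⟨hF.comp_mem a ha m hm.1, ?_, ?_⟩
    · rintro t ⟨s, hs, rfl⟩
      rintro ⟨p, q⟩ ⟨y, hy, hys⟩
      exact ⟨y, hy, hm.2.1 s hs hys⟩
    · intro c hc hub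
      refine H a ha m hm.1 c hc ?_
      intro x hx hxm
      -- find s ∈ S with x ⊆ s
      have hxs : ∃ s ∈ S, x ⊆ s := by
        by_contra hno
        push_neg at hno
        -- every s ∈ S is disjoint from x, so m ⊆ A(x)∘m, contradicting x ⊆ m, x ≠ ∅
        have hdisj : ∀ s ∈ S, ∀ p y z : X, (p, y) ∈ x → (p, z) ∉ s := by
          intro s hs p y z hpx hpz
          have hxi : x ∩ s ∈ F := hF.inter_mem x hx.1 s (hS hs)
          have : y = z := hF.pf m hm.1 (hxm hpx) (hm.2.1 s hs hpz)
          have hne : x ∩ s ≠ ∅ := fun h => by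
            have : (p, y) ∈ x ∩ s := ⟨hpx, this ▸ hpz⟩
            simp [h] at this
          have := hx.2.2 (x ∩ s) hxi hne Set.inter_subset_left
          exact hno s hs (this ▸ Set.inter_subset_right)
        have hkF : comp (adom x) m ∈ F := hF.comp_mem _ (hF.adom_mem _ hx.1) m hm.1
        have hmk : m ⊆ comp (adom x) m := by
          refine hm.2.2 _ hkF ?_
          rintro s hs ⟨p, q⟩ hpq
          rw [restrict_mem]
          exact ⟨fun y hy => hdisj s hs p y q hy hpq, hm.2.1 s hs hpq⟩
        obtain ⟨⟨r, t⟩, hrt⟩ := Set.nonempty_iff_ne_empty.2 hx.2.1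
        exact ((restrict_mem _ _ _ _).1 (hmk (hxm hrt))).1 t hrt
      obtain ⟨s, hs, hxs⟩ := hxs
      have : comp a x ⊆ comp a s := by
        rintro ⟨p, q⟩ ⟨y, hy, hyx⟩
        exact ⟨y, hy, hxs hyx⟩
      exact this.trans (hub _ ⟨s, hs, rfl⟩)
end
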